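/- arXiv:1811.07804 — 7 statements merged into one kernel-verified Lean document; each statement's English description precedes it below -/
import Mathlib

section
/- Let P₁, P₂ be symmetric positive definite n×n real matrices and T₁, T₂ invertible n×n real matrices with T₁ᵀ * P₁⁻¹ * T₁ = T₂ᵀ * P₂⁻¹ * T₂, and let A := P₂ * (T₂ᵀ)⁻¹ * T₁ᵀ * P₁⁻¹. Then the pushforward of the centered multivariate Gaussian measure on ℝⁿ with covariance matrix P₁ under the linear map given by A is the centered multivariate Gaussian measure on ℝⁿ with covariance matrix P₂. -/
open Matrix MeasureTheory ProbabilityTheory Finset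
open scoped ENNReal

/-- The standard Gaussian measure on `ℝⁿ` (product of standard normals). -/
noncomputable def stdGaussian (n : ℕ) : Measure (Fin n → ℝ) :=
  Measure.pi fun _ => gaussianReal 0 1

/-- The centered multivariate Gaussian measure on `ℝⁿ` with (positive semidefinite)
covariance matrix `P`: the pushforward of the standard Gaussian under the positive
semidefinite square root of `P`, which indeed has mean zero and covariance
`P.sqrt * P.sqrtᵀ = P`. -/
noncomputable def centeredGaussian {n : ℕ} (P : Matrix (Fin n) (Fin n) ℝ)
    (hP : P.PosSemidef) : Measure (Fin n → ℝ) :=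
  (stdGaussian n).map (fun x => ((hP.1.eigenvectorUnitary : Matrix (Fin n) (Fin n) ℝ) *
    diagonal (fun i => Real.sqrt (hP.1.eigenvalues i)) *
    (star hP.1.eigenvectorUnitary : Matrix (Fin n) (Fin n) ℝ)) *ᵥ x)

variable {n : ℕ}

lemma lmarginal_prod (g : Fin n → ℝ → ℝ≥0∞) (hg : ∀ i, Measurable (g i))
    (s : Finset (Fin n)) (x : Fin n → ℝ) :
    (∫⋯∫⁻_s, (fun y => ∏ i ∈ s, g i (y i)) ∂(fun _ => (volume : Measure ℝ))) x
      = ∏ i ∈ s, ∫⁻ t, g i t := by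
  induction s using Finset.induction_on generalizing x with
  | empty => simp
  | @insert a s ha ih =>
    have hF : Measurable (fun y : Fin n → ℝ => ∏ i ∈ insert a s, g i (y i)) :=
      Finset.measurable_prod _ fun i _ => (hg i).comp (measurable_pi_apply i)
    rw [lmarginal_insert _ hF ha]
    have key : ∀ w : Fin n → ℝ,
        (∫⋯∫⁻_s, (fun y => ∏ i ∈ insert a s, g i (y i)) ∂(fun _ => (volume : Measure ℝ))) w
          = g a (w a) * ∏ i ∈ s, ∫⁻ t, g i t := by
      intro w
      have : ∀ z : (i : s) → ℝ,
          (∏ i ∈ insert a s, g i (Function.updateFinset w s z i))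
            = g a (w a) * ∏ i ∈ s, g i (Function.updateFinset w s z i) := by
        intro z
        rw [Finset.prod_insert ha]
        congr 2
        simp [Function.updateFinset, ha]
      rw [lmarginal]
      simp_rw [this]
      rw [lintegral_const_mul _ (by
        exact Finset.measurable_prod _ fun i _ =>
          (hg i).comp ((measurable_pi_apply i).comp (measurable_updateFinset (x := w) (s := s)) : Measurable
            fun z : (i : s) → ℝ => Function.updateFinset w s z i))]
      congr 1
      have h2 := ih w
      rw [lmarginal] at h2
      simpa using h2
    simp_rw [key, Function.update_self]
    rw [lintegral_mul_const _ (hg a), Finset.prod_insert ha]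

lemma stdGaussian_eq_withDensity (n : ℕ) :
    stdGaussian n = (volume : Measure (Fin n → ℝ)).withDensity
      (fun x => ∏ i, gaussianPDF 0 1 (x i)) := by
  rw [_root_.stdGaussian]
  refine Measure.pi_eq fun s hs => ?_
  rw [withDensity_apply _ (MeasurableSet.univ_pi hs),
    ← lintegral_indicator (MeasurableSet.univ_pi hs)]
  have hind : ∀ x : Fin n → ℝ,
      (Set.univ.pi s).indicator (fun x => ∏ i, gaussianPDF 0 1 (x i)) x
        = ∏ i, (s i).indicator (gaussianPDF 0 1) (x i) := by
    intro x
    by_cases h : x ∈ Set.univ.pi s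
    · rw [Set.indicator_of_mem h]
      exact Finset.prod_congr rfl fun i _ =>
        (Set.indicator_of_mem (h i trivial) _).symm
    · rw [Set.indicator_of_notMem h]
      simp only [Set.mem_univ_pi] at h
      push_neg at h
      obtain ⟨i, hi⟩ := h
      exact (Finset.prod_eq_zero (Finset.mem_univ i)
        (Set.indicator_of_notMem hi _)).symm
  simp_rw [hind]
  rw [volume_pi, lintegral_eq_lmarginal_univ (0 : Fin n → ℝ),
    lmarginal_prod _ (fun i => (measurable_gaussianPDF 0 1).indicator (hs i)) Finset.univ 0]
  refine Finset.prod_congr rfl fun i _ => ?_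
  rw [lintegral_indicator (hs i), gaussianReal_of_var_ne_zero 0 one_ne_zero,
    withDensity_apply _ (hs i)]

lemma prod_gaussianPDF_eq (x : Fin n → ℝ) :
    (∏ i, gaussianPDF 0 1 (x i))
      = ENNReal.ofReal ((Real.sqrt (2 * Real.pi))⁻¹ ^ n
          * Real.exp (-(∑ i, x i ^ 2) / 2)) := by
  simp_rw [gaussianPDF]
  rw [← ENNReal.ofReal_prod_of_nonneg (fun i _ => gaussianPDFReal_nonneg 0 1 (x i))]
  congr 1
  simp only [gaussianPDFReal, NNReal.coe_one, mul_one, sub_zero]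
  rw [Finset.prod_mul_distrib, Finset.prod_const, Finset.card_univ, Fintype.card_fin,
    ← Real.exp_sum]
  congr 1
  rw [← Finset.sum_div, Finset.sum_neg_distrib]

lemma stdGaussian_map_orthogonal {O : Matrix (Fin n) (Fin n) ℝ} (hO : O * Oᵀ = 1) :
    (stdGaussian n).map (fun x => O *ᵥ x) = stdGaussian n := by
  have hfun : (fun x : Fin n → ℝ => O *ᵥ x) = Matrix.toLin' O := by
    funext x; simp [Matrix.toLin'_apply]
  have hTmeas : Measurable (fun x : Fin n → ℝ => O *ᵥ x) := by
    rw [hfun]; exact (Matrix.toLin' O).continuous_of_finiteDimensional.measurable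
  have hdet2 : O.det ^ 2 = 1 := by
    have := congrArg Matrix.det hO
    rwa [Matrix.det_mul, Matrix.det_transpose, Matrix.det_one, ← pow_two] at this
  have habs : |O.det| = 1 := by nlinarith [abs_nonneg O.det, sq_abs O.det]
  have hdet : O.det ≠ 0 := by
    intro h; rw [h] at habs; simp at habs
  have hvol : Measure.map (fun x : Fin n → ℝ => O *ᵥ x) volume = volume := by
    rw [hfun, Real.map_matrix_volume_pi_eq_smul_volume_pi hdet, abs_inv, habs]
    simp
  have hOtO : Oᵀ * O = 1 := mul_eq_one_comm.mp hO
  have hsum : ∀ x : Fin n → ℝ, ∑ i, (O *ᵥ x) i ^ 2 = ∑ i, x i ^ 2 := by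
    intro x
    have h1 : ∀ v : Fin n → ℝ, ∑ i, v i ^ 2 = v ⬝ᵥ v := by
      intro v; simp [dotProduct, pow_two]
    rw [h1, h1, Matrix.dotProduct_mulVec, Matrix.vecMul_mulVec, hOtO,
      Matrix.vecMul_one]
  set d : (Fin n → ℝ) → ℝ≥0∞ := fun x => ∏ i, gaussianPDF 0 1 (x i) with hd_def
  have hdmeas : Measurable d :=
    Finset.measurable_prod _ fun i _ =>
      (measurable_gaussianPDF 0 1).comp (measurable_pi_apply i)
  have hd : ∀ x, d (O *ᵥ x) = d x := by
    intro x
    rw [hd_def]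
    simp only
    rw [prod_gaussianPDF_eq, prod_gaussianPDF_eq, hsum]
  rw [stdGaussian_eq_withDensity]
  ext s hs
  rw [Measure.map_apply hTmeas hs, ← hd_def,
    withDensity_apply _ (hTmeas hs), withDensity_apply _ hs]
  calc ∫⁻ x in (fun x => O *ᵥ x) ⁻¹' s, d x ∂volume
      = ∫⁻ x in (fun x => O *ᵥ x) ⁻¹' s, d (O *ᵥ x) ∂volume := by simp_rw [hd]
    _ = ∫⁻ y in s, d y ∂(Measure.map (fun x => O *ᵥ x) volume) :=
        (setLIntegral_map hs hdmeas hTmeas).symm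
    _ = ∫⁻ y in s, d y ∂volume := by rw [hvol]

lemma measurable_mulVec' (M : Matrix (Fin n) (Fin n) ℝ) :
    Measurable (fun x : Fin n → ℝ => M *ᵥ x) := by
  have : (fun x : Fin n → ℝ => M *ᵥ x) = Matrix.toLin' M := by
    funext x; simp [Matrix.toLin'_apply]
  rw [this]; exact (Matrix.toLin' M).continuous_of_finiteDimensional.measurable

lemma stdGaussian_map_eq_of_mul_transpose {M N : Matrix (Fin n) (Fin n) ℝ}
    (hN : IsUnit N.det) (h : M * Mᵀ = N * Nᵀ) :
    (stdGaussian n).map (fun x => M *ᵥ x) = (stdGaussian n).map (fun x => N *ᵥ x) := by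
  have hNT : IsUnit Nᵀ.det := by rwa [Matrix.det_transpose]
  set O := N⁻¹ * M with hO_def
  have hNO : N * O = M := by
    rw [hO_def, ← Matrix.mul_assoc, Matrix.mul_nonsing_inv _ hN, Matrix.one_mul]
  have hOO : O * Oᵀ = 1 := by
    rw [hO_def, Matrix.transpose_mul, Matrix.transpose_nonsing_inv]
    calc N⁻¹ * M * (Mᵀ * Nᵀ⁻¹) = N⁻¹ * (M * Mᵀ) * Nᵀ⁻¹ := by
          simp only [Matrix.mul_assoc]
      _ = N⁻¹ * (N * Nᵀ) * Nᵀ⁻¹ := by rw [h]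
      _ = 1 := by
          rw [← Matrix.mul_assoc, Matrix.nonsing_inv_mul _ hN, Matrix.one_mul,
            Matrix.mul_nonsing_inv _ hNT]
  have hcomp : (fun x : Fin n → ℝ => M *ᵥ x)
      = (fun x : Fin n → ℝ => N *ᵥ x) ∘ (fun x : Fin n → ℝ => O *ᵥ x) := by
    funext x
    simp [Matrix.mulVec_mulVec, hNO]
  rw [hcomp, ← Measure.map_map (measurable_mulVec' N) (measurable_mulVec' O),
    stdGaussian_map_orthogonal hOO]

lemma psdSqrt_transpose (P : Matrix (Fin n) (Fin n) ℝ) (hP : P.PosSemidef) :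
    ((hP.1.eigenvectorUnitary : Matrix (Fin n) (Fin n) ℝ) *
    diagonal (fun i => Real.sqrt (hP.1.eigenvalues i)) *
    (star hP.1.eigenvectorUnitary : Matrix (Fin n) (Fin n) ℝ))ᵀ = ((hP.1.eigenvectorUnitary : Matrix (Fin n) (Fin n) ℝ) *
    diagonal (fun i => Real.sqrt (hP.1.eigenvalues i)) *
    (star hP.1.eigenvectorUnitary : Matrix (Fin n) (Fin n) ℝ)) := by
  rw [Matrix.transpose_mul, Matrix.transpose_mul, Matrix.diagonal_transpose]
  simp [Matrix.star_eq_conjTranspose, Matrix.conjTranspose_eq_transpose_of_trivial, Matrix.mul_assoc]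

lemma psdSqrt_mul_self (P : Matrix (Fin n) (Fin n) ℝ) (hP : P.PosSemidef) :
    ((hP.1.eigenvectorUnitary : Matrix (Fin n) (Fin n) ℝ) *
    diagonal (fun i => Real.sqrt (hP.1.eigenvalues i)) *
    (star hP.1.eigenvectorUnitary : Matrix (Fin n) (Fin n) ℝ)) * ((hP.1.eigenvectorUnitary : Matrix (Fin n) (Fin n) ℝ) *
    diagonal (fun i => Real.sqrt (hP.1.eigenvalues i)) *
    (star hP.1.eigenvectorUnitary : Matrix (Fin n) (Fin n) ℝ)) = P := by
  have hU : (star hP.1.eigenvectorUnitary : Matrix (Fin n) (Fin n) ℝ) * (hP.1.eigenvectorUnitary : Matrix (Fin n) (Fin n) ℝ) = 1 :=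
    Unitary.coe_star_mul_self _
  have hD : diagonal (fun i => Real.sqrt (hP.1.eigenvalues i)) * diagonal (fun i => Real.sqrt (hP.1.eigenvalues i))
      = diagonal hP.1.eigenvalues := by
    rw [diagonal_mul_diagonal]
    congr 1; funext i; exact Real.mul_self_sqrt (hP.eigenvalues_nonneg i)
  conv_rhs => rw [hP.1.spectral_theorem, Unitary.conjStarAlgAut_apply]
  calc _ = (hP.1.eigenvectorUnitary : Matrix (Fin n) (Fin n) ℝ) * diagonal (fun i => Real.sqrt (hP.1.eigenvalues i)) * ((star hP.1.eigenvectorUnitary : Matrix (Fin n) (Fin n) ℝ) * (hP.1.eigenvectorUnitary : Matrix (Fin n) (Fin n) ℝ)) * diagonal (fun i => Real.sqrt (hP.1.eigenvalues i)) * (star hP.1.eigenvectorUnitary : Matrix (Fin n) (Fin n) ℝ) := by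
          simp only [Matrix.mul_assoc]
    _ = _ := by
          rw [hU, Matrix.mul_one, Matrix.mul_assoc _ (diagonal _) (diagonal _), hD]
          simp

theorem stmt_8 {n : ℕ} (T₁ T₂ P₁ P₂ : Matrix (Fin n) (Fin n) ℝ)
    (hT₁ : IsUnit T₁.det) (hT₂ : IsUnit T₂.det)
    (hP₁ : P₁.PosDef) (hP₂ : P₂.PosDef)
    (heq : T₁ᵀ * P₁⁻¹ * T₁ = T₂ᵀ * P₂⁻¹ * T₂) :
    (centeredGaussian P₁ hP₁.posSemidef).map
        (fun ξ => (P₂ * (T₂ᵀ)⁻¹ * T₁ᵀ * P₁⁻¹) *ᵥ ξ)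
      = centeredGaussian P₂ hP₂.posSemidef := by
  set A : Matrix (Fin n) (Fin n) ℝ := P₂ * (T₂ᵀ)⁻¹ * T₁ᵀ * P₁⁻¹ with hA_def
  set s₁ := ((hP₁.posSemidef.1.eigenvectorUnitary : Matrix (Fin n) (Fin n) ℝ) * diagonal (fun i => Real.sqrt (hP₁.posSemidef.1.eigenvalues i)) * (star hP₁.posSemidef.1.eigenvectorUnitary : Matrix (Fin n) (Fin n) ℝ)) with hs₁_def
  set s₂ := ((hP₂.posSemidef.1.eigenvectorUnitary : Matrix (Fin n) (Fin n) ℝ) * diagonal (fun i => Real.sqrt (hP₂.posSemidef.1.eigenvalues i)) * (star hP₂.posSemidef.1.eigenvectorUnitary : Matrix (Fin n) (Fin n) ℝ)) with hs₂_def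
  have hs₁T : s₁ᵀ = s₁ := psdSqrt_transpose P₁ hP₁.posSemidef
  have hs₂T : s₂ᵀ = s₂ := psdSqrt_transpose P₂ hP₂.posSemidef
  have hs₁sq : s₁ * s₁ = P₁ := psdSqrt_mul_self P₁ hP₁.posSemidef
  have hs₂sq : s₂ * s₂ = P₂ := psdSqrt_mul_self P₂ hP₂.posSemidef
  have hP₁u : IsUnit P₁.det := isUnit_iff_ne_zero.mpr (ne_of_gt hP₁.det_pos)
  have hP₂u : IsUnit P₂.det := isUnit_iff_ne_zero.mpr (ne_of_gt hP₂.det_pos)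
  have hs₂u : IsUnit s₂.det := by
    rw [isUnit_iff_ne_zero]
    intro h0
    have := congrArg Matrix.det hs₂sq
    rw [Matrix.det_mul, h0, mul_zero] at this
    exact (ne_of_gt hP₂.det_pos) this.symm
  have hT₂T : IsUnit T₂ᵀ.det := by rwa [Matrix.det_transpose]
  have hP₁T : P₁ᵀ = P₁ := by
    have := hP₁.1.eq
    rwa [Matrix.conjTranspose_eq_transpose_of_trivial] at this
  have hP₂T : P₂ᵀ = P₂ := by
    have := hP₂.1.eq
    rwa [Matrix.conjTranspose_eq_transpose_of_trivial] at this
  have hAT : Aᵀ = P₁⁻¹ * T₁ * T₂⁻¹ * P₂ := by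
    rw [hA_def]
    simp only [Matrix.transpose_mul, Matrix.transpose_nonsing_inv, Matrix.transpose_transpose,
      hP₁T, hP₂T, Matrix.mul_assoc]
  -- key covariance identity
  have hkey : (A * s₁) * (A * s₁)ᵀ = s₂ * s₂ᵀ := by
    rw [Matrix.transpose_mul, hs₁T, hs₂T, hs₂sq]
    calc A * s₁ * (s₁ * Aᵀ) = A * (P₁ * Aᵀ) := by
          rw [Matrix.mul_assoc, ← Matrix.mul_assoc s₁ s₁ Aᵀ, hs₁sq]
      _ = P₂ := by
          rw [hAT, hA_def]
          simp only [Matrix.mul_assoc]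
          rw [Matrix.nonsing_inv_mul_cancel_left _ _ hP₁u]
          have heq' : ∀ Y : Matrix (Fin n) (Fin n) ℝ,
              T₁ᵀ * (P₁⁻¹ * (T₁ * Y)) = T₂ᵀ * (P₂⁻¹ * (T₂ * Y)) := by
            intro Y
            simp only [← Matrix.mul_assoc]
            rw [heq]
          rw [heq', Matrix.nonsing_inv_mul_cancel_left _ _ hT₂T,
            Matrix.mul_nonsing_inv_cancel_left _ _ hT₂,
            Matrix.mul_nonsing_inv_cancel_left _ _ hP₂u]
  rw [centeredGaussian, centeredGaussian,
    Measure.map_map (measurable_mulVec' A) (measurable_mulVec' s₁)]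
  have hcomp : (fun ξ : Fin n → ℝ => A *ᵥ ξ) ∘ (fun x : Fin n → ℝ => s₁ *ᵥ x)
      = fun x : Fin n → ℝ => (A * s₁) *ᵥ x := by
    funext x; simp [Matrix.mulVec_mulVec]
  rw [hcomp]
  exact stdGaussian_map_eq_of_mul_transpose hs₂u hkey
end

section
/- Let N ≥ 2 and let M₀, …, M_N be symmetric positive definite d×d real matrices and M_{k,k-1} (k = 1, …, N) arbitrary d×d real matrices. Suppose symmetric positive definite d×d matrices M^B₀, …, M^B_N and d×d matrices M^B_{k,k+1} (k = 0, …, N−1) satisfy: (M^B₀)⁻¹ = M₀⁻¹ + M_{1,0}ᵀ M₁⁻¹ M_{1,0}; M^B_{0,1} = M^B₀ M_{1,0}ᵀ M₁⁻¹; for k = 2, …, N: (M^B_{k-1})⁻¹ = M_{k-1}⁻¹ + M_{k,k-1}ᵀ M_k⁻¹ M_{k,k-1} − (M^B_{k-2,k-1})ᵀ (M^B_{k-2})⁻¹ M^B_{k-2,k-1} and M^B_{k-1,k} = M^B_{k-1} M_{k,k-1}ᵀ M_k⁻¹; and (M^B_N)⁻¹ = M_N⁻¹ − (M^B_{N-1,N})ᵀ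 (M^B_{N-1})⁻¹ M^B_{N-1,N}. Let T_F be the (N+1)×(N+1) block matrix with identity d×d blocks on the diagonal, blocks −M_{k,k-1} on the first block subdiagonal, and zero elsewhere; let P_F be the block-diagonal matrix with blocks M₀, …, M_N; let T_B be the block matrix with identity blocks on the diagonal, blocks −M^B_{k,k+1} on the first block superdiagonal, and zero elsewhere; let P_B be the block-diagonal matrix with blocks M^B₀, …, M^B_N. Then T_Bᵀ * P_B⁻¹ * T_B = T_Fᵀ * P_F⁻¹ * T_F. -/
open Matrix

private lemma sum_ite_single_aux {n : ℕ} {α : Type*} [AddCommMonoid α] (P : Fin n → Prop)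
    [DecidablePred P] (g : Fin n → α) (k₀ : Fin n) (h : ∀ k, P k → k = k₀) :
    (∑ k, (if P k then g k else 0)) = if P k₀ then g k₀ else 0 := by
  apply Finset.sum_eq_single k₀
  · intro k _ hk
    rw [if_neg]
    exact fun hp => hk (h k hp)
  · intro hk
    exact absurd (Finset.mem_univ k₀) hk

set_option maxHeartbeats 2000000 in
theorem stmt_9 {N d : ℕ} (hN : 2 ≤ N)
    -- forward parameters: covariances `M k` (k = 0, …, N) and transitions `Mt k = M_{k,k-1}`
    (M Mt : ℕ → Matrix (Fin d) (Fin d) ℝ)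
    (hM : ∀ k ≤ N, (M k).PosDef)
    -- backward parameters: covariances `MB k` (k = 0, …, N) and transitions `MBt k = M^B_{k,k+1}`
    (MB MBt : ℕ → Matrix (Fin d) (Fin d) ℝ)
    (hMB : ∀ k ≤ N, (MB k).PosDef)
    (h0 : (MB 0)⁻¹ = (M 0)⁻¹ + (Mt 1)ᵀ * (M 1)⁻¹ * Mt 1)
    (h0' : MBt 0 = MB 0 * (Mt 1)ᵀ * (M 1)⁻¹)
    (hrec : ∀ k, 2 ≤ k → k ≤ N →
      (MB (k - 1))⁻¹ = (M (k - 1))⁻¹ + (Mt k)ᵀ * (M k)⁻¹ * Mt k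
        - (MBt (k - 2))ᵀ * (MB (k - 2))⁻¹ * MBt (k - 2))
    (hrec' : ∀ k, 2 ≤ k → k ≤ N →
      MBt (k - 1) = MB (k - 1) * (Mt k)ᵀ * (M k)⁻¹)
    (hN' : (MB N)⁻¹ = (M N)⁻¹ - (MBt (N - 1))ᵀ * (MB (N - 1))⁻¹ * MBt (N - 1)) :
    -- block model matrices
    let T_F : Matrix (Fin (N + 1) × Fin d) (Fin (N + 1) × Fin d) ℝ :=
      Matrix.of fun p q =>
        if (p.1 : ℕ) = (q.1 : ℕ) then (1 : Matrix (Fin d) (Fin d) ℝ) p.2 q.2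
        else if (p.1 : ℕ) = (q.1 : ℕ) + 1 then (-(Mt (p.1 : ℕ))) p.2 q.2
        else 0
    let P_F : Matrix (Fin (N + 1) × Fin d) (Fin (N + 1) × Fin d) ℝ :=
      Matrix.of fun p q =>
        if (p.1 : ℕ) = (q.1 : ℕ) then (M (p.1 : ℕ)) p.2 q.2 else 0
    let T_B : Matrix (Fin (N + 1) × Fin d) (Fin (N + 1) × Fin d) ℝ :=
      Matrix.of fun p q =>
        if (p.1 : ℕ) = (q.1 : ℕ) then (1 : Matrix (Fin d) (Fin d) ℝ) p.2 q.2
        else if (q.1 : ℕ) = (p.1 : ℕ) + 1 then (-(MBt (p.1 : ℕ))) p.2 q.2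
        else 0
    let P_B : Matrix (Fin (N + 1) × Fin d) (Fin (N + 1) × Fin d) ℝ :=
      Matrix.of fun p q =>
        if (p.1 : ℕ) = (q.1 : ℕ) then (MB (p.1 : ℕ)) p.2 q.2 else 0
    T_Bᵀ * P_B⁻¹ * T_B = T_Fᵀ * P_F⁻¹ * T_F := by
  intro T_F P_F T_B P_B
  -- invertibility and symmetry facts
  have hMdet : ∀ k ≤ N, IsUnit (M k).det :=
    fun k hk => isUnit_iff_ne_zero.2 (hM k hk).det_pos.ne'
  have hMBdet : ∀ k ≤ N, IsUnit (MB k).det :=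
    fun k hk => isUnit_iff_ne_zero.2 (hMB k hk).det_pos.ne'
  have hMsym : ∀ k ≤ N, ((M k)⁻¹)ᵀ = (M k)⁻¹ := by
    intro k hk
    rw [Matrix.transpose_nonsing_inv, ← (M k).conjTranspose_eq_transpose_of_trivial,
      (hM k hk).1.eq]
  have hMBsym : ∀ k ≤ N, ((MB k)⁻¹)ᵀ = (MB k)⁻¹ := by
    intro k hk
    rw [Matrix.transpose_nonsing_inv, ← (MB k).conjTranspose_eq_transpose_of_trivial,
      (hMB k hk).1.eq]
  -- key superdiagonal identity
  have key : ∀ i : ℕ, i + 1 ≤ N → (MB i)⁻¹ * MBt i = (Mt (i + 1))ᵀ * (M (i + 1))⁻¹ := by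
    intro i hi
    have hinv : (MB i)⁻¹ * MB i = 1 := Matrix.nonsing_inv_mul _ (hMBdet i (by omega))
    rcases Nat.eq_zero_or_pos i with h | h
    · subst h
      rw [h0', ← Matrix.mul_assoc, ← Matrix.mul_assoc, hinv, Matrix.one_mul]
    · have h' := hrec' (i + 1) (by omega) (by omega)
      simp only [Nat.add_sub_cancel] at h'
      rw [h', ← Matrix.mul_assoc, ← Matrix.mul_assoc, hinv, Matrix.one_mul]
  -- outer block matrices
  set e := Matrix.compRingEquiv (Fin (N + 1)) (Fin d) ℝ with he
  set LF : Matrix (Fin (N + 1)) (Fin (N + 1)) (Matrix (Fin d) (Fin d) ℝ) :=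
    Matrix.of fun i j => if (i : ℕ) = (j : ℕ) + 1 then Mt (i : ℕ) else 0 with hLF
  set LFt : Matrix (Fin (N + 1)) (Fin (N + 1)) (Matrix (Fin d) (Fin d) ℝ) :=
    Matrix.of fun i j => if (j : ℕ) = (i : ℕ) + 1 then (Mt (j : ℕ))ᵀ else 0 with hLFt
  set LB : Matrix (Fin (N + 1)) (Fin (N + 1)) (Matrix (Fin d) (Fin d) ℝ) :=
    Matrix.of fun i j => if (j : ℕ) = (i : ℕ) + 1 then MBt (i : ℕ) else 0 with hLB
  set LBt : Matrix (Fin (N + 1)) (Fin (N + 1)) (Matrix (Fin d) (Fin d) ℝ) :=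
    Matrix.of fun i j => if (i : ℕ) = (j : ℕ) + 1 then (MBt (j : ℕ))ᵀ else 0 with hLBt
  set DF := Matrix.diagonal (fun i : Fin (N + 1) => M (i : ℕ)) with hDF
  set DFi := Matrix.diagonal (fun i : Fin (N + 1) => (M (i : ℕ))⁻¹) with hDFi
  set DB := Matrix.diagonal (fun i : Fin (N + 1) => MB (i : ℕ)) with hDB
  set DBi := Matrix.diagonal (fun i : Fin (N + 1) => (MB (i : ℕ))⁻¹) with hDBi
  -- identifications of the big matrices with composed block matrices
  have hTF : T_F = e (1 - LF) := by
    ext ⟨i, a⟩ ⟨j, b⟩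
    show (if (i : ℕ) = (j : ℕ) then (1 : Matrix (Fin d) (Fin d) ℝ) a b
        else if (i : ℕ) = (j : ℕ) + 1 then (-(Mt (i : ℕ))) a b else 0)
      = ((1 : Matrix (Fin (N + 1)) (Fin (N + 1)) (Matrix (Fin d) (Fin d) ℝ)) i j
          - (if (i : ℕ) = (j : ℕ) + 1 then Mt (i : ℕ) else 0)) a b
    simp only [Matrix.sub_apply, Matrix.one_apply, Matrix.diagonal_apply, ite_apply,
      Matrix.zero_apply, Matrix.neg_apply, Matrix.transpose_apply, Fin.ext_iff, sub_zero,
      zero_sub]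
    split_ifs <;>
      first
        | rfl
        | omega
        | (exfalso; omega)
        | ((try simp only [Matrix.one_apply, Matrix.zero_apply, Fin.ext_iff]);
            split_ifs <;> first | rfl | (exfalso; omega) | simp_all [Fin.ext_iff])
        | simp [Matrix.neg_apply, Matrix.transpose_apply, Matrix.one_apply, Fin.ext_iff]
        | simp_all [Matrix.one_apply, Fin.ext_iff, Matrix.neg_apply, Matrix.transpose_apply]
  have hTFt : T_Fᵀ = e (1 - LFt) := by
    ext ⟨i, a⟩ ⟨j, b⟩
    show (if (j : ℕ) = (i : ℕ) then (1 : Matrix (Fin d) (Fin d) ℝ) b a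
        else if (j : ℕ) = (i : ℕ) + 1 then (-(Mt (j : ℕ))) b a else 0)
      = ((1 : Matrix (Fin (N + 1)) (Fin (N + 1)) (Matrix (Fin d) (Fin d) ℝ)) i j
          - (if (j : ℕ) = (i : ℕ) + 1 then (Mt (j : ℕ))ᵀ else 0)) a b
    simp only [Matrix.sub_apply, Matrix.one_apply, Matrix.diagonal_apply, ite_apply,
      Matrix.zero_apply, Matrix.neg_apply, Matrix.transpose_apply, Fin.ext_iff, sub_zero,
      zero_sub]
    split_ifs <;>
      first
        | rfl
        | omega
        | (exfalso; omega)
        | ((try simp only [Matrix.one_apply, Matrix.zero_apply, Fin.ext_iff]);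
            split_ifs <;> first | rfl | (exfalso; omega) | simp_all [Fin.ext_iff])
        | simp [Matrix.neg_apply, Matrix.transpose_apply, Matrix.one_apply, Fin.ext_iff]
        | simp_all [Matrix.one_apply, Fin.ext_iff, Matrix.neg_apply, Matrix.transpose_apply]
  have hTB : T_B = e (1 - LB) := by
    ext ⟨i, a⟩ ⟨j, b⟩
    show (if (i : ℕ) = (j : ℕ) then (1 : Matrix (Fin d) (Fin d) ℝ) a b
        else if (j : ℕ) = (i : ℕ) + 1 then (-(MBt (i : ℕ))) a b else 0)
      = ((1 : Matrix (Fin (N + 1)) (Fin (N + 1)) (Matrix (Fin d) (Fin d) ℝ)) i j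
          - (if (j : ℕ) = (i : ℕ) + 1 then MBt (i : ℕ) else 0)) a b
    simp only [Matrix.sub_apply, Matrix.one_apply, Matrix.diagonal_apply, ite_apply,
      Matrix.zero_apply, Matrix.neg_apply, Matrix.transpose_apply, Fin.ext_iff, sub_zero,
      zero_sub]
    split_ifs <;>
      first
        | rfl
        | omega
        | (exfalso; omega)
        | ((try simp only [Matrix.one_apply, Matrix.zero_apply, Fin.ext_iff]);
            split_ifs <;> first | rfl | (exfalso; omega) | simp_all [Fin.ext_iff])
        | simp [Matrix.neg_apply, Matrix.transpose_apply, Matrix.one_apply, Fin.ext_iff]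
        | simp_all [Matrix.one_apply, Fin.ext_iff, Matrix.neg_apply, Matrix.transpose_apply]
  have hTBt : T_Bᵀ = e (1 - LBt) := by
    ext ⟨i, a⟩ ⟨j, b⟩
    show (if (j : ℕ) = (i : ℕ) then (1 : Matrix (Fin d) (Fin d) ℝ) b a
        else if (i : ℕ) = (j : ℕ) + 1 then (-(MBt (j : ℕ))) b a else 0)
      = ((1 : Matrix (Fin (N + 1)) (Fin (N + 1)) (Matrix (Fin d) (Fin d) ℝ)) i j
          - (if (i : ℕ) = (j : ℕ) + 1 then (MBt (j : ℕ))ᵀ else 0)) a b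
    simp only [Matrix.sub_apply, Matrix.one_apply, Matrix.diagonal_apply, ite_apply,
      Matrix.zero_apply, Matrix.neg_apply, Matrix.transpose_apply, Fin.ext_iff, sub_zero,
      zero_sub]
    split_ifs <;>
      first
        | rfl
        | omega
        | (exfalso; omega)
        | ((try simp only [Matrix.one_apply, Matrix.zero_apply, Fin.ext_iff]);
            split_ifs <;> first | rfl | (exfalso; omega) | simp_all [Fin.ext_iff])
        | simp [Matrix.neg_apply, Matrix.transpose_apply, Matrix.one_apply, Fin.ext_iff]
        | simp_all [Matrix.one_apply, Fin.ext_iff, Matrix.neg_apply, Matrix.transpose_apply]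
  have hPF : P_F = e DF := by
    ext ⟨i, a⟩ ⟨j, b⟩
    show (if (i : ℕ) = (j : ℕ) then (M (i : ℕ)) a b else 0)
      = (Matrix.diagonal (fun i : Fin (N + 1) => M (i : ℕ))) i j a b
    simp only [Matrix.sub_apply, Matrix.one_apply, Matrix.diagonal_apply, ite_apply,
      Matrix.zero_apply, Matrix.neg_apply, Matrix.transpose_apply, Fin.ext_iff, sub_zero,
      zero_sub]
    split_ifs <;>
      first
        | rfl
        | omega
        | (exfalso; omega)
        | ((try simp only [Matrix.one_apply, Matrix.zero_apply, Fin.ext_iff]);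
            split_ifs <;> first | rfl | (exfalso; omega) | simp_all [Fin.ext_iff])
        | simp [Matrix.neg_apply, Matrix.transpose_apply, Matrix.one_apply, Fin.ext_iff]
        | simp_all [Matrix.one_apply, Fin.ext_iff, Matrix.neg_apply, Matrix.transpose_apply]
  have hPB : P_B = e DB := by
    ext ⟨i, a⟩ ⟨j, b⟩
    show (if (i : ℕ) = (j : ℕ) then (MB (i : ℕ)) a b else 0)
      = (Matrix.diagonal (fun i : Fin (N + 1) => MB (i : ℕ))) i j a b
    simp only [Matrix.sub_apply, Matrix.one_apply, Matrix.diagonal_apply, ite_apply,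
      Matrix.zero_apply, Matrix.neg_apply, Matrix.transpose_apply, Fin.ext_iff, sub_zero,
      zero_sub]
    split_ifs <;>
      first
        | rfl
        | omega
        | (exfalso; omega)
        | ((try simp only [Matrix.one_apply, Matrix.zero_apply, Fin.ext_iff]);
            split_ifs <;> first | rfl | (exfalso; omega) | simp_all [Fin.ext_iff])
        | simp [Matrix.neg_apply, Matrix.transpose_apply, Matrix.one_apply, Fin.ext_iff]
        | simp_all [Matrix.one_apply, Fin.ext_iff, Matrix.neg_apply, Matrix.transpose_apply]
  -- the inverses of the block-diagonal matrices
  have hPFi : P_F⁻¹ = e DFi := by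
    apply Matrix.inv_eq_right_inv
    rw [hPF, ← _root_.map_mul, hDF, hDFi, Matrix.diagonal_mul_diagonal]
    have hfun : (fun i : Fin (N + 1) => M (i : ℕ) * (M (i : ℕ))⁻¹)
        = fun _ => (1 : Matrix (Fin d) (Fin d) ℝ) := by
      funext i
      exact Matrix.mul_nonsing_inv _ (hMdet (i : ℕ) (by omega))
    rw [hfun, Matrix.diagonal_one, _root_.map_one]
  have hPBi : P_B⁻¹ = e DBi := by
    apply Matrix.inv_eq_right_inv
    rw [hPB, ← _root_.map_mul, hDB, hDBi, Matrix.diagonal_mul_diagonal]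
    have hfun : (fun i : Fin (N + 1) => MB (i : ℕ) * (MB (i : ℕ))⁻¹)
        = fun _ => (1 : Matrix (Fin d) (Fin d) ℝ) := by
      funext i
      exact Matrix.mul_nonsing_inv _ (hMBdet (i : ℕ) (by omega))
    rw [hfun, Matrix.diagonal_one, _root_.map_one]
  rw [hTBt, hPBi, hTB, hTFt, hPFi, hTF, ← _root_.map_mul, ← _root_.map_mul, ← _root_.map_mul, ← _root_.map_mul]
  congr 1
  -- now an identity of (N+1) × (N+1) matrices over d × d matrices
  have expandB : (1 - LBt) * DBi * (1 - LB) = DBi - LBt * DBi - DBi * LB + LBt * DBi * LB := by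
    noncomm_ring
  have expandF : (1 - LFt) * DFi * (1 - LF) = DFi - LFt * DFi - DFi * LF + LFt * DFi * LF := by
    noncomm_ring
  rw [expandB, expandF]
  -- entry formulas for the triple products
  have hTripB : ∀ i j : Fin (N + 1), (LBt * DBi * LB) i j =
      if (i : ℕ) = (j : ℕ) ∧ 1 ≤ (i : ℕ) then
        (MBt ((i : ℕ) - 1))ᵀ * (MB ((i : ℕ) - 1))⁻¹ * MBt ((i : ℕ) - 1) else 0 := by
    intro i j
    rw [Matrix.mul_apply]
    have : ∀ k : Fin (N + 1), (LBt * DBi) i k * LB k j =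
        if (i : ℕ) = (k : ℕ) + 1 ∧ (j : ℕ) = (k : ℕ) + 1 then
          (MBt (k : ℕ))ᵀ * (MB (k : ℕ))⁻¹ * MBt (k : ℕ) else 0 := by
      intro k
      rw [hDBi, Matrix.mul_diagonal, hLBt, hLB]
      simp only [Matrix.of_apply, ite_mul, zero_mul, mul_ite, mul_zero, ← ite_and]
      exact if_congr and_comm rfl rfl
    rw [Finset.sum_congr rfl (fun k _ => this k)]
    rw [sum_ite_single_aux _ _ ⟨(i : ℕ) - 1, by omega⟩
      (fun k hk => Fin.ext (by simp only [] at hk ⊢; omega))]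
    by_cases h : (i : ℕ) = (j : ℕ) ∧ 1 ≤ (i : ℕ)
    · rw [if_pos (by simp only []; omega), if_pos h]
    · rw [if_neg (by simp only []; omega), if_neg h]
  have hTripF : ∀ i j : Fin (N + 1), (LFt * DFi * LF) i j =
      if (i : ℕ) = (j : ℕ) ∧ (i : ℕ) + 1 ≤ N then
        (Mt ((i : ℕ) + 1))ᵀ * (M ((i : ℕ) + 1))⁻¹ * Mt ((i : ℕ) + 1) else 0 := by
    intro i j
    rw [Matrix.mul_apply]
    have : ∀ k : Fin (N + 1), (LFt * DFi) i k * LF k j =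
        if (k : ℕ) = (i : ℕ) + 1 ∧ (k : ℕ) = (j : ℕ) + 1 then
          (Mt (k : ℕ))ᵀ * (M (k : ℕ))⁻¹ * Mt (k : ℕ) else 0 := by
      intro k
      rw [hDFi, Matrix.mul_diagonal, hLFt, hLF]
      simp only [Matrix.of_apply, ite_mul, zero_mul, mul_ite, mul_zero, ← ite_and]
      first | rfl | exact if_congr and_comm rfl rfl
    rw [Finset.sum_congr rfl (fun k _ => this k)]
    rw [sum_ite_single_aux _ _ ⟨min ((i : ℕ) + 1) N, by omega⟩
      (fun k hk => Fin.ext (by have := k.isLt; simp only [] at hk ⊢; omega))]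
    by_cases h : (i : ℕ) = (j : ℕ) ∧ (i : ℕ) + 1 ≤ N
    · rw [if_pos (by simp only []; omega), if_pos h]
      have hmin : min ((i : ℕ) + 1) N = (i : ℕ) + 1 := by omega
      simp only [hmin]
    · rw [if_neg (by have := j.isLt; simp only []; omega), if_neg h]
  -- finish entrywise
  refine Matrix.ext fun i j => ?_
  have hiN : (i : ℕ) ≤ N := by omega
  have hjN : (j : ℕ) ≤ N := by omega
  simp only [Matrix.add_apply, Matrix.sub_apply, hTripB i j, hTripF i j]
  simp only [Matrix.add_apply, Matrix.sub_apply, hTripB i j, hTripF i j, hDBi, hDFi,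
    Matrix.diagonal_apply, Matrix.mul_diagonal, Matrix.diagonal_mul, hLB, hLBt, hLF, hLFt,
    Matrix.of_apply, ite_mul, zero_mul, mul_ite, mul_zero]
  by_cases hij : i = j
  · subst hij
    have h1 : ¬ (i : ℕ) = (i : ℕ) + 1 := by omega
    rw [if_pos rfl, if_pos rfl, if_neg h1, if_neg h1, if_neg h1, if_neg h1]
    by_cases h2 : (i : ℕ) = 0
    · rw [if_neg (by omega), if_pos (by constructor <;> omega)]
      simp only [h2]
      rw [h0]
      abel
    · by_cases h3 : (i : ℕ) = N
      · rw [if_pos (by constructor <;> omega), if_neg (by omega)]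
        simp only [h3]
        rw [hN']
        abel
      · rw [if_pos ⟨rfl, by omega⟩, if_pos ⟨rfl, by omega⟩]
        have h4 := hrec ((i : ℕ) + 1) (by omega) (by omega)
        have e1 : (i : ℕ) + 1 - 1 = (i : ℕ) := by omega
        have e2 : (i : ℕ) + 1 - 2 = (i : ℕ) - 1 := by omega
        rw [e1, e2] at h4
        rw [h4]
        abel
  · have hij' : ¬ (i : ℕ) = (j : ℕ) := fun h => hij (Fin.ext h)
    rw [if_neg hij, if_neg hij,
      if_neg (show ¬((i : ℕ) = (j : ℕ) ∧ 1 ≤ (i : ℕ)) from fun h => hij' h.1),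
      if_neg (show ¬((i : ℕ) = (j : ℕ) ∧ (i : ℕ) + 1 ≤ N) from fun h => hij' h.1)]
    by_cases h1 : (j : ℕ) = (i : ℕ) + 1
    · have h2 : ¬ (i : ℕ) = (j : ℕ) + 1 := by omega
      rw [if_neg h2, if_pos h1, if_neg h2, if_pos h1]
      have hkey := key (i : ℕ) (by omega)
      rw [h1, hkey]
      abel
    · by_cases h2 : (i : ℕ) = (j : ℕ) + 1
      · rw [if_pos h2, if_neg h1, if_pos h2, if_neg h1]
        have hkey := key (j : ℕ) (by omega)
        have hkeyT := congrArg Matrix.transpose hkey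
        rw [Matrix.transpose_mul, Matrix.transpose_mul, Matrix.transpose_transpose,
          hMBsym (j : ℕ) hjN, hMsym ((j : ℕ) + 1) (by omega)] at hkeyT
        rw [h2, hkeyT]
        abel
      · rw [if_neg h2, if_neg h1, if_neg h2, if_neg h1]
end

section
/- Let N ≥ 2, let M₀, …, M_N be symmetric positive definite d×d real matrices, M_{k,k-1} (k = 1, …, N) d×d real matrices, and suppose symmetric positive definite M^B₀, …, M^B_N and matrices M^B_{k,k+1} (k = 0, …, N−1) satisfy the backward-parameter equations: (M^B₀)⁻¹ = M₀⁻¹ + M_{1,0}ᵀ M₁⁻¹ M_{1,0}; M^B_{0,1} = M^B₀ M_{1,0}ᵀ M₁⁻¹; for k = 2, …, N: (M^B_{k-1})⁻¹ = M_{k-1}⁻¹ + M_{k,k-1}ᵀ M_k⁻¹ M_{k,k-1} − (M^B_{k-2,k-1})ᵀ (M^B_{k-2})⁻¹ M^B_{k-2,k-1} and M^B_{k-1,k} = M^B_{k-1} M_{k,k-1}ᵀ M_k⁻¹; and (M^B_N)⁻¹ = M_N⁻¹ − (M^B_{N-1,N})ᵀ (M^B_{N-1})⁻¹ M^B_{N-1,N}.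 Let vectors x_k, e^M_k ∈ ℝ^d satisfy the forward Markov model x₀ = e^M₀ and x_k = M_{k,k-1} x_{k-1} + e^M_k for k = 1, …, N, and define vectors e^{MB}_k ∈ ℝ^d by: (M^B₀)⁻¹ e^{MB}₀ = M₀⁻¹ e^M₀ − M_{1,0}ᵀ M₁⁻¹ e^M₁; (M^B_k)⁻¹ e^{MB}_k = (M^B_{k-1,k})ᵀ (M^B_{k-1})⁻¹ e^{MB}_{k-1} + M_k⁻¹ e^M_k − M_{k+1,k}ᵀ M_{k+1}⁻¹ e^M_{k+1} for k = 1, …, N−1; and (M^B_N)⁻¹ e^{MB}_N = (M^B_{N-1,N})ᵀ (M^B_{N-1})⁻¹ e^{MB}_{N-1} + M_N⁻¹ e^M_N. Then x_N = e^{MB}_N and x_k = M^B_{k,k+1} x_{k+1} + e^{MB}_k for all k = 0, …, N−1. -/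
open Matrix

private lemma stmt10_base {d : ℕ} (A B T' MBinv : Matrix (Fin d) (Fin d) ℝ)
    (e0 e1 x0 x1 eb0 : Fin d → ℝ)
    (h1 : MBinv = A + B * T')
    (hx0 : x0 = e0)
    (hx1 : x1 = T' *ᵥ x0 + e1)
    (heb : MBinv *ᵥ eb0 = A *ᵥ e0 - B *ᵥ e1) :
    MBinv *ᵥ x0 = B *ᵥ x1 + MBinv *ᵥ eb0 := by
  have hT' : T' *ᵥ x0 = x1 - e1 := by rw [hx1]; abel
  rw [heb, h1, Matrix.add_mulVec, ← Matrix.mulVec_mulVec, hT', hx0]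
  simp only [Matrix.mulVec_sub]
  abel

private lemma stmt10_step {d : ℕ} (A B Q T T' MBinv : Matrix (Fin d) (Fin d) ℝ)
    (a ej ej1 eb xj xj1 ebj : Fin d → ℝ)
    (h1 : MBinv = A + B * T' - (A * T) * Q)
    (hxj : xj = T *ᵥ a + ej)
    (hxj1 : xj1 = T' *ᵥ xj + ej1)
    (hIH : a = Q *ᵥ xj + eb)
    (hebj : MBinv *ᵥ ebj = (A * T) *ᵥ eb + A *ᵥ ej - B *ᵥ ej1) :
    MBinv *ᵥ xj = B *ᵥ xj1 + MBinv *ᵥ ebj := by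
  have hQ : Q *ᵥ xj = a - eb := by rw [hIH]; abel
  have hT' : T' *ᵥ xj = xj1 - ej1 := by rw [hxj1]; abel
  rw [hebj, h1, Matrix.sub_mulVec, Matrix.add_mulVec,
    ← Matrix.mulVec_mulVec xj B T', ← Matrix.mulVec_mulVec xj (A * T) Q,
    hQ, hT', hxj]
  simp only [Matrix.mulVec_add, Matrix.mulVec_sub, Matrix.mulVec_mulVec]
  abel

private lemma stmt10_final {d : ℕ} (A Q T MBinv : Matrix (Fin d) (Fin d) ℝ)
    (a eN eb xN ebN : Fin d → ℝ)
    (h1 : MBinv = A - (A * T) * Q)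
    (hxN : xN = T *ᵥ a + eN)
    (hprev : a = Q *ᵥ xN + eb)
    (hebN : MBinv *ᵥ ebN = (A * T) *ᵥ eb + A *ᵥ eN) :
    MBinv *ᵥ xN = MBinv *ᵥ ebN := by
  have hQ : Q *ᵥ xN = a - eb := by rw [hprev]; abel
  rw [hebN, h1, Matrix.sub_mulVec, ← Matrix.mulVec_mulVec xN (A * T) Q, hQ, hxN]
  simp only [Matrix.mulVec_add, Matrix.mulVec_sub, Matrix.mulVec_mulVec]
  abel

theorem stmt_10 {N d : ℕ} (hN : 2 ≤ N)
    -- forward parameters: covariances `M k` (k = 0, …, N) and transitions `Mt k = M_{k,k-1}`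
    (M Mt : ℕ → Matrix (Fin d) (Fin d) ℝ)
    (hM : ∀ k ≤ N, (M k).PosDef)
    -- backward parameters: covariances `MB k` (k = 0, …, N) and transitions `MBt k = M^B_{k,k+1}`
    (MB MBt : ℕ → Matrix (Fin d) (Fin d) ℝ)
    (hMB : ∀ k ≤ N, (MB k).PosDef)
    (h0 : (MB 0)⁻¹ = (M 0)⁻¹ + (Mt 1)ᵀ * (M 1)⁻¹ * Mt 1)
    (h0' : MBt 0 = MB 0 * (Mt 1)ᵀ * (M 1)⁻¹)
    (hrec : ∀ k, 2 ≤ k → k ≤ N →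
      (MB (k - 1))⁻¹ = (M (k - 1))⁻¹ + (Mt k)ᵀ * (M k)⁻¹ * Mt k
        - (MBt (k - 2))ᵀ * (MB (k - 2))⁻¹ * MBt (k - 2))
    (hrec' : ∀ k, 2 ≤ k → k ≤ N →
      MBt (k - 1) = MB (k - 1) * (Mt k)ᵀ * (M k)⁻¹)
    (hN' : (MB N)⁻¹ = (M N)⁻¹ - (MBt (N - 1))ᵀ * (MB (N - 1))⁻¹ * MBt (N - 1))
    -- sample paths: states `x k`, forward noises/initial value `e k`,
    -- backward noises/final value `eB k`
    (x e eB : ℕ → Fin d → ℝ)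
    -- the forward Markov model
    (hx0 : x 0 = e 0)
    (hxk : ∀ k, 1 ≤ k → k ≤ N → x k = Mt k *ᵥ x (k - 1) + e k)
    -- the correspondence defining the backward noises and final value
    (he0 : (MB 0)⁻¹ *ᵥ eB 0 = (M 0)⁻¹ *ᵥ e 0 - ((Mt 1)ᵀ * (M 1)⁻¹) *ᵥ e 1)
    (hek : ∀ k, 1 ≤ k → k ≤ N - 1 →
      (MB k)⁻¹ *ᵥ eB k = ((MBt (k - 1))ᵀ * (MB (k - 1))⁻¹) *ᵥ eB (k - 1)
        + (M k)⁻¹ *ᵥ e k - ((Mt (k + 1))ᵀ * (M (k + 1))⁻¹) *ᵥ e (k + 1))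
    (heN : (MB N)⁻¹ *ᵥ eB N = ((MBt (N - 1))ᵀ * (MB (N - 1))⁻¹) *ᵥ eB (N - 1)
        + (M N)⁻¹ *ᵥ e N) :
    -- the backward Markov model holds for the same sample path
    x N = eB N ∧ ∀ k < N, x k = MBt k *ᵥ x (k + 1) + eB k := by
  have hdet : ∀ k, k ≤ N → IsUnit (MB k).det := fun k hk => (hMB k hk).det_pos.ne'.isUnit
  -- cancellation of the invertible matrix (MB j)⁻¹
  have cancel : ∀ j, j ≤ N → ∀ u v : Fin d → ℝ,
      (MB j)⁻¹ *ᵥ u = (MB j)⁻¹ *ᵥ v → u = v := by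
    intro j hj u v h
    have h2 := congrArg (fun w => MB j *ᵥ w) h
    simpa [Matrix.mulVec_mulVec, Matrix.mul_nonsing_inv _ (hdet j hj)] using h2
  -- symmetry facts
  have hsymMB : ∀ k, k ≤ N → (MB k)ᵀ = MB k := by
    intro k hk
    have h1 := (hMB k hk).isHermitian.eq
    rwa [Matrix.conjTranspose_eq_transpose_of_trivial] at h1
  have hsymMinv : ∀ k, k ≤ N → ((M k)⁻¹)ᵀ = (M k)⁻¹ := by
    intro k hk
    have h1 := (hM k hk).isHermitian.eq
    rw [Matrix.conjTranspose_eq_transpose_of_trivial] at h1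
    rw [Matrix.transpose_nonsing_inv, h1]
  -- unified recursion for MBt
  have hrec'' : ∀ j, 1 ≤ j → j ≤ N → MBt (j - 1) = MB (j - 1) * (Mt j)ᵀ * (M j)⁻¹ := by
    intro j h1 h2
    rcases Nat.lt_or_ge j 2 with h | h
    · interval_cases j
      simpa using h0'
    · exact hrec' j h h2
  -- key identity: (MBt (j-1))ᵀ * (MB (j-1))⁻¹ = (M j)⁻¹ * Mt j
  have hTid : ∀ j, 1 ≤ j → j ≤ N → (MBt (j - 1))ᵀ * (MB (j - 1))⁻¹ = (M j)⁻¹ * Mt j := by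
    intro j h1 h2
    have hj1 : j - 1 ≤ N := le_trans (Nat.sub_le _ _) h2
    rw [hrec'' j h1 h2, Matrix.transpose_mul, Matrix.transpose_mul, hsymMinv j h2,
      Matrix.transpose_transpose, hsymMB (j - 1) hj1]
    simp only [Matrix.mul_assoc]
    rw [Matrix.mul_nonsing_inv _ (hdet (j - 1) hj1), Matrix.mul_one]
  -- key identity: (MB j)⁻¹ * MBt j = (Mt (j+1))ᵀ * (M (j+1))⁻¹
  have hBid : ∀ j, j + 1 ≤ N → (MB j)⁻¹ * MBt j = (Mt (j + 1))ᵀ * (M (j + 1))⁻¹ := by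
    intro j hj
    have h := hrec'' (j + 1) (by omega) hj
    rw [Nat.add_sub_cancel] at h
    rw [h]
    simp only [← Matrix.mul_assoc]
    rw [Matrix.nonsing_inv_mul _ (hdet j (by omega)), Matrix.one_mul]
  -- the backward model at indices below N
  have key : ∀ k, k < N → x k = MBt k *ᵥ x (k + 1) + eB k := by
    intro k
    induction k with
    | zero =>
      intro hk
      apply cancel 0 (by omega)
      rw [Matrix.mulVec_add, Matrix.mulVec_mulVec, hBid 0 (by omega)]
      refine stmt10_base _ _ _ _ _ _ _ _ _ h0 hx0 ?_ he0
      have h := hxk 1 (by omega) (by omega)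
      simpa using h
    | succ k ih =>
      intro hk
      have ihk := ih (by omega)
      apply cancel (k + 1) (by omega)
      rw [Matrix.mulVec_add, Matrix.mulVec_mulVec, hBid (k + 1) (by omega)]
      refine stmt10_step (M (k + 1))⁻¹ ((Mt (k + 2))ᵀ * (M (k + 2))⁻¹) (MBt k)
        (Mt (k + 1)) (Mt (k + 2)) _ (x k) (e (k + 1)) (e (k + 2)) (eB k)
        (x (k + 1)) (x (k + 2)) (eB (k + 1)) ?_ ?_ ?_ ihk ?_
      · have h := hrec (k + 2) (by omega) (by omega)
        have e1 : k + 2 - 1 = k + 1 := by omega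
        have e2 : k + 2 - 2 = k := by omega
        rw [e1, e2] at h
        have hT := hTid (k + 1) (by omega) (by omega)
        rw [Nat.add_sub_cancel] at hT
        rw [h, hT]
      · have h := hxk (k + 1) (by omega) (by omega)
        rwa [Nat.add_sub_cancel] at h
      · have h := hxk (k + 2) (by omega) (by omega)
        have e1 : k + 2 - 1 = k + 1 := by omega
        rwa [e1] at h
      · have h := hek (k + 1) (by omega) (by omega)
        have hT := hTid (k + 1) (by omega) (by omega)
        rw [Nat.add_sub_cancel] at hT h
        rw [h, hT]
  refine ⟨?_, key⟩
  -- the final step: x N = eB N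
  apply cancel N le_rfl
  have hprev := key (N - 1) (by omega)
  have e1 : N - 1 + 1 = N := by omega
  rw [e1] at hprev
  have hT := hTid N (by omega) le_rfl
  refine stmt10_final (M N)⁻¹ (MBt (N - 1)) (Mt N) _ (x (N - 1)) (e N) (eB (N - 1))
    (x N) (eB N) ?_ ?_ hprev ?_
  · rw [hN', hT]
  · exact hxk N (by omega) le_rfl
  · rw [heN, hT]
end

section
/- Let N ≥ 2, let M₀, …, M_N be symmetric positive definite d×d real matrices and M_{k,k-1} (k = 1, …, N) arbitrary d×d real matrices. Then there exist unique symmetric positive definite d×d matrices M^B₀, …, M^B_N and unique d×d matrices M^B_{k,k+1} (k = 0, …, N−1) satisfying: (M^B₀)⁻¹ = M₀⁻¹ + M_{1,0}ᵀ M₁⁻¹ M_{1,0}; M^B_{0,1} = M^B₀ M_{1,0}ᵀ M₁⁻¹; for k = 2, …, N: (M^B_{k-1})⁻¹ = M_{k-1}⁻¹ + M_{k,k-1}ᵀ M_k⁻¹ M_{k,k-1} − (M^B_{k-2,k-1})ᵀ (M^B_{k-2})⁻¹ M^B_{k-2,k-1} and M^B_{k-1,k} = M^B_{k-1} M_{k,k-1}ᵀ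 M_k⁻¹; and (M^B_N)⁻¹ = M_N⁻¹ − (M^B_{N-1,N})ᵀ (M^B_{N-1})⁻¹ M^B_{N-1,N}. -/
open Matrix

/-- `MB k` (k = 0, …, N) and `MBt k = M^B_{k,k+1}` (k = 0, …, N−1) are backward Markov
parameters for the forward parameters `M k` (covariances) and `Mt k = M_{k,k-1}`
(transitions): the `MB k` are symmetric positive definite and the backward-parameter
recursions hold. -/
def IsBackwardMarkovParams (N : ℕ) {d : ℕ}
    (M Mt MB MBt : ℕ → Matrix (Fin d) (Fin d) ℝ) : Prop :=
  (∀ k ≤ N, (MB k).PosDef) ∧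
  (MB 0)⁻¹ = (M 0)⁻¹ + (Mt 1)ᵀ * (M 1)⁻¹ * Mt 1 ∧
  MBt 0 = MB 0 * (Mt 1)ᵀ * (M 1)⁻¹ ∧
  (∀ k, 2 ≤ k → k ≤ N →
    (MB (k - 1))⁻¹ = (M (k - 1))⁻¹ + (Mt k)ᵀ * (M k)⁻¹ * Mt k
        - (MBt (k - 2))ᵀ * (MB (k - 2))⁻¹ * MBt (k - 2) ∧
    MBt (k - 1) = MB (k - 1) * (Mt k)ᵀ * (M k)⁻¹) ∧
  (MB N)⁻¹ = (M N)⁻¹ - (MBt (N - 1))ᵀ * (MB (N - 1))⁻¹ * MBt (N - 1)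

namespace StmtAux

variable {d : ℕ}

lemma psdT {P : Matrix (Fin d) (Fin d) ℝ} (h : P.PosSemidef)
    (B : Matrix (Fin d) (Fin d) ℝ) : (Bᵀ * P * B).PosSemidef := by
  simpa [Matrix.conjTranspose_eq_transpose_of_trivial] using h.conjTranspose_mul_mul_same B

lemma psdT' {P : Matrix (Fin d) (Fin d) ℝ} (h : P.PosSemidef)
    (B : Matrix (Fin d) (Fin d) ℝ) : (B * P * Bᵀ).PosSemidef := by
  simpa [Matrix.conjTranspose_eq_transpose_of_trivial] using h.mul_mul_conjTranspose_same B

lemma inv_inv_pd {P : Matrix (Fin d) (Fin d) ℝ} (h : P.PosDef) : P⁻¹⁻¹ = P :=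
  Matrix.nonsing_inv_nonsing_inv _ h.det_pos.ne'.isUnit

lemma symm_pd {P : Matrix (Fin d) (Fin d) ℝ} (h : P.IsHermitian) : Pᵀ = P := by
  simpa [Matrix.conjTranspose_eq_transpose_of_trivial] using h.eq

lemma inv_eq_of_pd {P Q : Matrix (Fin d) (Fin d) ℝ} (hP : P.PosDef) (hQ : Q.PosDef)
    (h : P⁻¹ = Q⁻¹) : P = Q := by
  rw [← inv_inv_pd hP, h, inv_inv_pd hQ]

noncomputable def T (M Mt : ℕ → Matrix (Fin d) (Fin d) ℝ) : ℕ → Matrix (Fin d) (Fin d) ℝ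
  | 0 => (M 0)⁻¹
  | (k+1) => (M (k+1) + Mt (k+1) * (T M Mt k)⁻¹ * (Mt (k+1))ᵀ)⁻¹

noncomputable def S (M Mt : ℕ → Matrix (Fin d) (Fin d) ℝ) (k : ℕ) :
    Matrix (Fin d) (Fin d) ℝ :=
  T M Mt k + (Mt (k+1))ᵀ * (M (k+1))⁻¹ * Mt (k+1)

lemma S_def (M Mt : ℕ → Matrix (Fin d) (Fin d) ℝ) (k : ℕ) :
    S M Mt k = T M Mt k + (Mt (k+1))ᵀ * (M (k+1))⁻¹ * Mt (k+1) := rfl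

lemma wood {Mk A T0 : Matrix (Fin d) (Fin d) ℝ} (hMk : Mk.PosDef) (hT : T0.PosDef)
    (hS : (T0 + Aᵀ * Mk⁻¹ * A).PosDef) :
    (Mk + A * T0⁻¹ * Aᵀ)⁻¹
      = Mk⁻¹ - Mk⁻¹ * A * (T0 + Aᵀ * Mk⁻¹ * A)⁻¹ * Aᵀ * Mk⁻¹ := by
  have h1 := Matrix.add_mul_mul_inv_eq_sub Mk A T0⁻¹ Aᵀ hMk.isUnit hT.inv.isUnit
    (by rw [inv_inv_pd hT]; exact hS.isUnit)
  rwa [inv_inv_pd hT] at h1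

lemma quad {Sj A1 M1i : Matrix (Fin d) (Fin d) ℝ} (hs : Sj.PosDef) (hMsym : M1iᵀ = M1i) :
    (Sj⁻¹ * A1ᵀ * M1i)ᵀ * Sj * (Sj⁻¹ * A1ᵀ * M1i) = M1i * A1 * Sj⁻¹ * A1ᵀ * M1i := by
  have hst : (Sj⁻¹)ᵀ = Sj⁻¹ := by
    rw [Matrix.transpose_nonsing_inv, symm_pd hs.isHermitian]
  have hmul : Sj⁻¹ * Sj = 1 := Matrix.nonsing_inv_mul _ hs.det_pos.ne'.isUnit
  rw [Matrix.transpose_mul, Matrix.transpose_mul, Matrix.transpose_transpose, hst, hMsym]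
  simp only [← Matrix.mul_assoc]
  rw [Matrix.mul_assoc (M1i * A1), hmul, Matrix.mul_one]

lemma T_pd {N : ℕ} {M Mt : ℕ → Matrix (Fin d) (Fin d) ℝ} (hM : ∀ k ≤ N, (M k).PosDef) :
    ∀ k ≤ N, (T M Mt k).PosDef := by
  intro k
  induction k with
  | zero => intro h; exact (hM 0 h).inv
  | succ n ih =>
    intro h
    exact ((hM (n+1) h).add_posSemidef (psdT' ((ih (by omega)).inv).posSemidef _)).inv

lemma S_pd {N : ℕ} {M Mt : ℕ → Matrix (Fin d) (Fin d) ℝ} (hM : ∀ k ≤ N, (M k).PosDef) :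
    ∀ k < N, (S M Mt k).PosDef := fun k hk =>
  (T_pd hM k (by omega)).add_posSemidef (psdT ((hM (k+1) (by omega)).inv).posSemidef _)

end StmtAux
open StmtAux in
theorem stmt_11 {N d : ℕ} (hN : 2 ≤ N)
    (M Mt : ℕ → Matrix (Fin d) (Fin d) ℝ)
    (hM : ∀ k ≤ N, (M k).PosDef) :
    (∃ MB MBt : ℕ → Matrix (Fin d) (Fin d) ℝ,
        IsBackwardMarkovParams N M Mt MB MBt) ∧
    (∀ MB MBt MB' MBt' : ℕ → Matrix (Fin d) (Fin d) ℝ,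
        IsBackwardMarkovParams N M Mt MB MBt →
        IsBackwardMarkovParams N M Mt MB' MBt' →
        (∀ k ≤ N, MB k = MB' k) ∧ (∀ k < N, MBt k = MBt' k)) := by
  have hT := T_pd (Mt := Mt) hM
  have hS := S_pd (Mt := Mt) hM
  constructor
  · classical
    set MB : ℕ → Matrix (Fin d) (Fin d) ℝ :=
      fun k => if k = N then (T M Mt N)⁻¹ else (S M Mt k)⁻¹ with hMBdef
    set MBt : ℕ → Matrix (Fin d) (Fin d) ℝ :=
      fun k => MB k * (Mt (k+1))ᵀ * (M (k+1))⁻¹ with hMBtdef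
    have hMBt : ∀ k, MBt k = MB k * (Mt (k+1))ᵀ * (M (k+1))⁻¹ := fun k => rfl
    have hMBeq : ∀ k < N, MB k = (S M Mt k)⁻¹ := by
      intro k hk; simp only [hMBdef, if_neg (Nat.ne_of_lt hk)]
    have hMBinv : ∀ k < N, (MB k)⁻¹ = S M Mt k := by
      intro k hk; rw [hMBeq k hk, inv_inv_pd (hS k hk)]
    have hMBN : MB N = (T M Mt N)⁻¹ := by simp only [hMBdef, if_pos rfl]
    refine ⟨MB, MBt, ?_, ?_, ?_, ?_, ?_⟩
    · intro k hk
      rcases eq_or_lt_of_le hk with h | h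
      · rw [h, hMBN]; exact (hT N le_rfl).inv
      · rw [hMBeq k h]; exact (hS k h).inv
    · rw [hMBinv 0 (by omega), S_def]
      rfl
    · exact hMBt 0
    · intro k hk2 hkN
      obtain ⟨j, rfl⟩ : ∃ j, k = j + 2 := ⟨k - 2, by omega⟩
      have e1 : j + 2 - 1 = j + 1 := rfl
      have e2 : j + 2 - 2 = j := rfl
      have hj1 : j + 1 < N := by omega
      have hj : j < N := by omega
      constructor
      · rw [e1, e2, hMBinv (j+1) hj1, hMBt j, hMBeq j hj, inv_inv_pd (hS j hj),
          quad (hS j hj) (symm_pd (hM (j+1) (by omega)).isHermitian.inv), S_def]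
        have hTstep : T M Mt (j+1)
            = (M (j+1) + Mt (j+1) * (T M Mt j)⁻¹ * (Mt (j+1))ᵀ)⁻¹ := rfl
        rw [hTstep, wood (hM (j+1) (by omega)) (hT j (by omega))
          (by rw [← S_def]; exact hS j hj), ← S_def]
        abel
      · rw [e1]
    · obtain ⟨m, rfl⟩ : ∃ m, N = m + 1 := ⟨N - 1, by omega⟩
      have e1 : m + 1 - 1 = m := rfl
      have hm : m < m + 1 := by omega
      rw [e1, hMBN, inv_inv_pd (hT (m+1) le_rfl), hMBt m, hMBeq m hm, inv_inv_pd (hS m hm),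
        quad (hS m hm) (symm_pd (hM (m+1) le_rfl).isHermitian.inv)]
      have hTstep : T M Mt (m+1)
          = (M (m+1) + Mt (m+1) * (T M Mt m)⁻¹ * (Mt (m+1))ᵀ)⁻¹ := rfl
      rw [hTstep, wood (hM (m+1) le_rfl) (hT m (by omega))
        (by rw [← S_def]; exact hS m hm), ← S_def]
  · rintro MB MBt MB' MBt' ⟨h1, h2, h3, h4, h5⟩ ⟨h1', h2', h3', h4', h5'⟩
    have key : ∀ j < N, MB j = MB' j ∧ MBt j = MBt' j := by
      intro j
      induction j with
      | zero =>
        intro _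
        have hMB0 : MB 0 = MB' 0 :=
          inv_eq_of_pd (h1 0 (by omega)) (h1' 0 (by omega)) (by rw [h2, h2'])
        exact ⟨hMB0, by rw [h3, h3', hMB0]⟩
      | succ i ih =>
        intro hi1
        obtain ⟨hBi, hBti⟩ := ih (by omega)
        have hk := h4 (i + 2) (by omega) (by omega)
        have hk' := h4' (i + 2) (by omega) (by omega)
        have e1 : i + 2 - 1 = i + 1 := rfl
        have e2 : i + 2 - 2 = i := rfl
        rw [e1, e2] at hk hk'
        have hMBsucc : MB (i+1) = MB' (i+1) :=
          inv_eq_of_pd (h1 (i+1) (by omega)) (h1' (i+1) (by omega))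
            (by rw [hk.1, hk'.1, hBi, hBti])
        exact ⟨hMBsucc, by rw [hk.2, hk'.2, hMBsucc]⟩
    have hMBN : MB N = MB' N := by
      obtain ⟨hB, hBt⟩ := key (N - 1) (by omega)
      exact inv_eq_of_pd (h1 N le_rfl) (h1' N le_rfl) (by rw [h5, h5', hB, hBt])
    refine ⟨fun k hk => ?_, fun k hk => (key k hk).2⟩
    rcases eq_or_lt_of_le hk with h | h
    · rw [h, hMBN]
    · exact (key k h).1
end

section
/- Under the hypotheses relating forward Markov parameters (M_k positive definite, M_{k,k-1}) and backward Markov parameters (M^B_k positive definite, M^B_{k,k+1}) via the equations (M^B₀)⁻¹ = M₀⁻¹ + M_{1,0}ᵀ M₁⁻¹ M_{1,0}; M^B_{0,1} = M^B₀ M_{1,0}ᵀ M₁⁻¹; for k = 2, …, N: (M^B_{k-1})⁻¹ = M_{k-1}⁻¹ + M_{k,k-1}ᵀ M_k⁻¹ M_{k,k-1} − (M^B_{k-2,k-1})ᵀ (M^B_{k-2})⁻¹ M^B_{k-2,k-1}, M^B_{k-1,k} = M^B_{k-1} M_{k,k-1}ᵀ M_k⁻¹; and (M^B_N)⁻¹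 = M_N⁻¹ − (M^B_{N-1,N})ᵀ (M^B_{N-1})⁻¹ M^B_{N-1,N}, let T_F, T_B be the block lower-bidiagonal and block upper-bidiagonal model matrices (identity diagonal blocks, subdiagonal blocks −M_{k,k-1}, superdiagonal blocks −M^B_{k,k+1}) and P_F, P_B the block-diagonal matrices with blocks M_k and M^B_k respectively. Then the matrix B := P_B * (T_Bᵀ)⁻¹ * T_Fᵀ * P_F⁻¹ satisfies B * P_F * Bᵀ = P_B. -/
open Matrix Finset

abbrev Blk (d : ℕ) := Matrix (Fin d) (Fin d) ℝ

/-- blockify an `ℕ`-indexed family of `d × d` blocks into a big matrix -/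
def Bk (N d : ℕ) (f : ℕ → ℕ → Blk d) :
    Matrix (Fin (N + 1) × Fin d) (Fin (N + 1) × Fin d) ℝ :=
  Matrix.of fun p q => (f p.1 q.1) p.2 q.2

lemma Bk_congr {N d : ℕ} {f g : ℕ → ℕ → Blk d}
    (h : ∀ i j : Fin (N + 1), f i j = g i j) : Bk N d f = Bk N d g := by
  ext ⟨i, x⟩ ⟨j, y⟩
  simp [Bk, h i j]

lemma Bk_mul {N d : ℕ} (f g : ℕ → ℕ → Blk d) :
    Bk N d f * Bk N d g = Bk N d fun i j => ∑ k : Fin (N + 1), f i k * g k j := by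
  ext ⟨i, x⟩ ⟨j, y⟩
  simp only [Bk, Matrix.mul_apply, Matrix.of_apply, Fintype.sum_prod_type, Matrix.sum_apply]

lemma Bk_transpose {N d : ℕ} (f : ℕ → ℕ → Blk d) :
    (Bk N d f)ᵀ = Bk N d fun i j => (f j i)ᵀ := by
  ext ⟨i, x⟩ ⟨j, y⟩
  simp [Bk]

lemma Bk_one {N d : ℕ} :
    Bk N d (fun i j => if i = j then 1 else 0) = 1 := by
  ext ⟨i, x⟩ ⟨j, y⟩
  by_cases h : i = j
  · subst h
    by_cases hxy : x = y <;> simp [Bk, Matrix.one_apply, hxy]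
  · have hv : (i : ℕ) ≠ (j : ℕ) := fun hc => h (Fin.val_injective hc)
    simp [Bk, Matrix.one_apply, hv, Prod.ext_iff, h]

lemma sum_support_pair {R : Type*} [AddCommMonoid R] (f : ℕ → R) (n c : ℕ) (hc : c < n)
    (h : ∀ k < n, k ≠ c → k ≠ c + 1 → f k = 0) :
    ∑ k ∈ Finset.range n, f k = f c + (if c + 1 < n then f (c + 1) else 0) := by
  by_cases h1 : c + 1 < n
  · rw [if_pos h1, ← Finset.sum_pair (by omega : c ≠ c + 1)]
    refine (Finset.sum_subset ?_ ?_).symm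
    · intro k hk
      simp only [Finset.mem_insert, Finset.mem_singleton, Finset.mem_range] at hk ⊢
      rcases hk with rfl | rfl <;> omega
    · intro k hk hk2
      simp only [Finset.mem_insert, Finset.mem_singleton, Finset.mem_range, not_or] at hk hk2
      exact h k hk hk2.1 hk2.2
  · rw [if_neg h1, add_zero]
    refine Finset.sum_eq_single_of_mem c (Finset.mem_range.2 hc) fun k hk hkc => ?_
    exact h k (Finset.mem_range.1 hk) hkc (by have := Finset.mem_range.1 hk; omega)
def fTF {d : ℕ} (Mt : ℕ → Blk d) : ℕ → ℕ → Blk d := fun i j =>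
  if i = j then 1 else if i = j + 1 then -(Mt i) else 0

def fTB {d : ℕ} (MBt : ℕ → Blk d) : ℕ → ℕ → Blk d := fun i j =>
  if i = j then 1 else if j = i + 1 then -(MBt i) else 0

def fD {d : ℕ} (M : ℕ → Blk d) : ℕ → ℕ → Blk d := fun i j =>
  if i = j then M i else 0

noncomputable def gF {d : ℕ} (M Mt : ℕ → Blk d) (Nn : ℕ) : ℕ → ℕ → Blk d := fun i j =>
  if i = j then (M i)⁻¹ + (if i < Nn then (Mt (i+1))ᵀ * ((M (i+1))⁻¹ * Mt (i+1)) else 0)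
  else if j = i + 1 then -((Mt (i+1))ᵀ * (M (i+1))⁻¹)
  else if i = j + 1 then -((M i)⁻¹ * Mt i)
  else 0

noncomputable def gB {d : ℕ} (MB MBt : ℕ → Blk d) : ℕ → ℕ → Blk d := fun i j =>
  if i = j then (MB i)⁻¹ + (if i = 0 then 0 else (MBt (i-1))ᵀ * ((MB (i-1))⁻¹ * MBt (i-1)))
  else if j = i + 1 then -((MB i)⁻¹ * MBt i)
  else if i = j + 1 then -((MBt j)ᵀ * (MB j)⁻¹)
  else 0

lemma diag_mul {N d : ℕ} (a : ℕ → Blk d) (f : ℕ → ℕ → Blk d) :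
    Bk N d (fD a) * Bk N d f = Bk N d fun i j => a i * f i j := by
  rw [Bk_mul]
  refine Bk_congr fun i j => ?_
  rw [Fintype.sum_eq_single i fun k hk => ?_]
  · simp [fD]
  · have hik : (i : ℕ) ≠ (k : ℕ) := fun hc => hk.symm (Fin.val_injective hc)
    simp [fD, hik]

lemma fD_mul_eq_one {N d : ℕ} (M1 M2 : ℕ → Blk d) (h : ∀ k ≤ N, M1 k * M2 k = 1) :
    Bk N d (fD M1) * Bk N d (fD M2) = 1 := by
  rw [diag_mul, ← Bk_one]
  refine Bk_congr fun i j => ?_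
  by_cases hij : (i : ℕ) = (j : ℕ)
  · simp only [fD, if_pos hij, ← hij, if_pos rfl]
    exact h i (Nat.lt_succ_iff.1 i.isLt)
  · simp [fD, hij]

lemma fD_symm {N d : ℕ} (M1 : ℕ → Blk d) (h : ∀ k ≤ N, (M1 k)ᵀ = M1 k) :
    (Bk N d (fD M1))ᵀ = Bk N d (fD M1) := by
  rw [Bk_transpose]
  refine Bk_congr fun i j => ?_
  by_cases hij : (i : ℕ) = (j : ℕ)
  · simp only [fD, hij, if_pos rfl]
    exact h j (Nat.lt_succ_iff.1 j.isLt)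
  · simp [fD, hij, Ne.symm hij]

lemma sumF {N d : ℕ} (M Mt : ℕ → Blk d) (i j : ℕ) (hi : i < N + 1) (hj : j < N + 1) :
    ∑ k ∈ Finset.range (N + 1), (fTF Mt k i)ᵀ * ((M k)⁻¹ * fTF Mt k j) = gF M Mt N i j := by
  rw [sum_support_pair _ (N+1) i hi (fun k hk h1 h2 => by
    simp only [fTF, if_neg h1, if_neg h2, Matrix.transpose_zero, zero_mul])]
  have e1 : fTF Mt i i = 1 := by simp [fTF]
  have e2 : fTF Mt (i+1) i = -(Mt (i+1)) := by simp [fTF]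
  rw [e1, e2]
  rcases eq_or_ne i j with rfl | hij
  · rw [e1, e2]
    simp [gF, Nat.add_lt_add_iff_right, Matrix.mul_assoc]
  · rcases eq_or_ne j (i+1) with rfl | hj1
    · have e3 : fTF Mt i (i+1) = 0 := by simp [fTF]; omega
      have e4 : fTF Mt (i+1) (i+1) = 1 := by simp [fTF]
      rw [e3, e4, if_pos hj]
      simp [gF, hij, Matrix.mul_assoc]
    · rcases eq_or_ne i (j+1) with rfl | hi1
      · have e3 : fTF Mt (j+1) j = -(Mt (j+1)) := by simp [fTF]
        have e4 : fTF Mt (j+1+1) j = 0 := by simp [fTF]; omega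
        rw [e3, e4]
        simp [gF, hij, hj1, Matrix.mul_assoc]
      · have e3 : fTF Mt i j = 0 := by simp [fTF, hij, hi1]
        have e4 : fTF Mt (i+1) j = 0 := by
          simp only [fTF]; rw [if_neg (fun h => hj1 h.symm), if_neg (by omega)]
        rw [e3, e4]
        simp [gF, hij, hj1, hi1]

lemma sumB {N d : ℕ} (MB MBt : ℕ → Blk d) (i j : ℕ) (hi : i < N + 1) (hj : j < N + 1) :
    ∑ k ∈ Finset.range (N + 1), (fTB MBt k i)ᵀ * ((MB k)⁻¹ * fTB MBt k j) = gB MB MBt i j := by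
  rcases i with _ | m
  · rw [Finset.sum_eq_single_of_mem 0 (Finset.mem_range.2 hi) (fun k hk hk0 => by
      simp only [fTB]; rw [if_neg hk0, if_neg (by omega), Matrix.transpose_zero, zero_mul])]
    have e1 : fTB MBt 0 0 = 1 := by simp [fTB]
    rw [e1, Matrix.transpose_one, one_mul]
    rcases eq_or_ne j 0 with rfl | hj0
    · rw [e1, mul_one]
      simp [gB]
    · rcases eq_or_ne j 1 with rfl | hj1
      · have e2 : fTB MBt 0 1 = -(MBt 0) := by simp [fTB]
        rw [e2]
        simp [gB]
      · have e2 : fTB MBt 0 j = 0 := by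
          simp only [fTB]; rw [if_neg (fun h => hj0 h.symm), if_neg (fun h : j = 1 => hj1 h)]
        rw [e2, mul_zero]
        simp [gB, Ne.symm hj0, hj0, hj1]
  · rw [sum_support_pair _ (N+1) m (by omega) (fun k hk h1 h2 => by
      simp only [fTB]; rw [if_neg (fun h : k = m + 1 => h2 h), if_neg (by omega),
        Matrix.transpose_zero, zero_mul]), if_pos hi]
    have e1 : fTB MBt m (m+1) = -(MBt m) := by simp [fTB]
    have e2 : fTB MBt (m+1) (m+1) = 1 := by simp [fTB]
    rw [e1, e2, Matrix.transpose_one, one_mul]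
    rcases eq_or_ne j (m+1) with rfl | hj1
    · rw [e1, e2, mul_one]
      simp only [gB, if_pos rfl, Nat.add_sub_cancel, Matrix.transpose_neg, Matrix.neg_mul,
        Matrix.mul_neg, neg_neg, if_neg (by omega : ¬(m+1 = 0))]
      exact add_comm _ _
    · rcases eq_or_ne j (m+2) with rfl | hj2
      · have e3 : fTB MBt m (m+2) = 0 := by simp [fTB]
        have e4 : fTB MBt (m+1) (m+2) = -(MBt (m+1)) := by simp [fTB]
        rw [e3, e4]
        simp [gB, hj1, Ne.symm hj1]
      · rcases eq_or_ne j m with rfl | hjm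
        · have e3 : fTB MBt j j = 1 := by simp [fTB]
          have e4 : fTB MBt (j+1) j = 0 := by
            simp only [fTB]; rw [if_neg (by omega), if_neg (by omega)]
          rw [e3, e4]
          simp [gB, Ne.symm hj1, (by omega : ¬(j+1 = j)), Matrix.mul_assoc]
          intro h; omega
        · have e3 : fTB MBt m j = 0 := by
            simp only [fTB]; rw [if_neg (fun h => hjm h.symm), if_neg (fun h => hj1 h)]
          have e4 : fTB MBt (m+1) j = 0 := by
            simp only [fTB]; rw [if_neg (fun h => hj1 h.symm), if_neg (fun h => hj2 h)]
          rw [e3, e4]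
          simp [gB, hj1, hj2, Ne.symm hj1]
          intro h; exact absurd h.symm hjm
lemma isUnit_det_Bk_fTB {N d : ℕ} (MBt : ℕ → Blk d) : IsUnit (Bk N d (fTB MBt)).det := by
  have hTri : (Bk N d (fTB MBt)).BlockTriangular Prod.fst := by
    intro p q h
    have hv : (q.1 : ℕ) < (p.1 : ℕ) := h
    simp only [Bk, fTB, Matrix.of_apply]
    rw [if_neg (by omega), if_neg (by omega)]
    rfl
  have hdet : (Bk N d (fTB MBt)).det = 1 := by
    rw [hTri.det]
    refine Finset.prod_eq_one fun a _ => ?_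
    have hblock : (Bk N d (fTB MBt)).toSquareBlock Prod.fst a = 1 := by
      ext p q
      have hp : (p : Fin (N+1) × Fin d).1 = a := p.2
      have hq : (q : Fin (N+1) × Fin d).1 = a := q.2
      simp only [Matrix.toSquareBlock_def, Bk, fTB, Matrix.of_apply]
      rw [if_pos (by rw [hp, hq])]
      by_cases hxy : (p : Fin (N+1) × Fin d).2 = (q : Fin (N+1) × Fin d).2
      · have hpq : p = q := Subtype.ext (Prod.ext (hp.trans hq.symm) hxy)
        rw [hpq, Matrix.one_apply_eq, Matrix.one_apply_eq]
      · have hpq : p ≠ q := fun h => hxy (by rw [h])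
        rw [Matrix.one_apply_ne hxy, Matrix.one_apply_ne hpq]
    rw [hblock, Matrix.det_one]
  rw [hdet]; exact isUnit_one
lemma key_blk {N d : ℕ} (hN : 2 ≤ N) (M Mt MB MBt : ℕ → Blk d)
    (hMBun : ∀ k ≤ N, IsUnit (MB k).det)
    (haT : ∀ k ≤ N, ((M k)⁻¹)ᵀ = (M k)⁻¹)
    (hMBsym : ∀ k ≤ N, (MB k)ᵀ = MB k)
    (h0 : (MB 0)⁻¹ = (M 0)⁻¹ + (Mt 1)ᵀ * (M 1)⁻¹ * Mt 1)
    (h0' : MBt 0 = MB 0 * (Mt 1)ᵀ * (M 1)⁻¹)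
    (hrec : ∀ k, 2 ≤ k → k ≤ N →
      (MB (k - 1))⁻¹ = (M (k - 1))⁻¹ + (Mt k)ᵀ * (M k)⁻¹ * Mt k
        - (MBt (k - 2))ᵀ * (MB (k - 2))⁻¹ * MBt (k - 2))
    (hrec' : ∀ k, 2 ≤ k → k ≤ N →
      MBt (k - 1) = MB (k - 1) * (Mt k)ᵀ * (M k)⁻¹)
    (hN' : (MB N)⁻¹ = (M N)⁻¹ - (MBt (N - 1))ᵀ * (MB (N - 1))⁻¹ * MBt (N - 1)) :
    ∀ i j : ℕ, i < N + 1 → j < N + 1 → gF M Mt N i j = gB MB MBt i j := by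
  have hbt : ∀ i, i + 1 ≤ N → MBt i = MB i * (Mt (i+1))ᵀ * (M (i+1))⁻¹ := by
    intro i hi
    rcases i with _ | m
    · simpa using h0'
    · have h := hrec' (m+2) (by omega) (by omega)
      simpa using h
  intro i j hi hj
  rcases eq_or_ne i j with rfl | hij
  · simp only [gF, gB, if_pos rfl]
    rcases Nat.eq_zero_or_pos i with rfl | hpos
    · rw [if_pos (by omega : 0 < N), if_pos rfl, add_zero, h0]
      simp only [Nat.zero_add, Matrix.mul_assoc, if_true]
    · rcases eq_or_ne i N with rfl | hiN
      · rw [if_neg (lt_irrefl i), if_neg (by omega : ¬i = 0), add_zero, hN']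
        rw [show (M i)⁻¹ - (MBt (i-1))ᵀ * (MB (i-1))⁻¹ * MBt (i-1)
              + (MBt (i-1))ᵀ * ((MB (i-1))⁻¹ * MBt (i-1))
            = (M i)⁻¹ from by rw [Matrix.mul_assoc, sub_add_cancel]]
        simp
      · rw [if_pos (by omega : i < N), if_neg (by omega : ¬i = 0)]
        have hr := hrec (i+1) (by omega) (by omega)
        have hs2 : i + 1 - 2 = i - 1 := by omega
        simp only [Nat.add_sub_cancel, hs2] at hr
        rw [hr]
        rw [show (M i)⁻¹ + (Mt (i+1))ᵀ * (M (i+1))⁻¹ * Mt (i+1)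
              - (MBt (i-1))ᵀ * (MB (i-1))⁻¹ * MBt (i-1)
              + (MBt (i-1))ᵀ * ((MB (i-1))⁻¹ * MBt (i-1))
            = (M i)⁻¹ + (Mt (i+1))ᵀ * ((M (i+1))⁻¹ * Mt (i+1)) from by
          rw [Matrix.mul_assoc ((MBt (i-1))ᵀ), sub_add_cancel, Matrix.mul_assoc]]
        simp
  · rcases eq_or_ne j (i+1) with rfl | hj1
    · simp only [gF, gB, if_neg hij, if_pos rfl]
      rw [hbt i (by omega)]
      simp only [← Matrix.mul_assoc]
      rw [Matrix.nonsing_inv_mul _ (hMBun i (by omega)), Matrix.one_mul]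
      simp
    · rcases eq_or_ne i (j+1) with rfl | hi1
      · simp only [gF, gB, if_neg hij, if_neg hj1, if_pos rfl]
        have h1 : (MBt j)ᵀ = (M (j+1))⁻¹ * (Mt (j+1) * MB j) := by
          rw [hbt j (by omega)]
          simp only [Matrix.transpose_mul, Matrix.transpose_transpose,
            haT (j+1) (by omega), hMBsym j (by omega), Matrix.mul_assoc]
        rw [h1]
        simp only [Matrix.mul_assoc]
        rw [Matrix.mul_nonsing_inv _ (hMBun j (by omega)), Matrix.mul_one]
      · simp only [gF, gB, if_neg hij, if_neg hj1, if_neg hi1]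
theorem stmt_12 {N d : ℕ} (hN : 2 ≤ N)
    -- forward parameters: covariances `M k` (k = 0, …, N) and transitions `Mt k = M_{k,k-1}`
    (M Mt : ℕ → Matrix (Fin d) (Fin d) ℝ)
    (hM : ∀ k ≤ N, (M k).PosDef)
    -- backward parameters: covariances `MB k` (k = 0, …, N) and transitions `MBt k = M^B_{k,k+1}`
    (MB MBt : ℕ → Matrix (Fin d) (Fin d) ℝ)
    (hMB : ∀ k ≤ N, (MB k).PosDef)
    (h0 : (MB 0)⁻¹ = (M 0)⁻¹ + (Mt 1)ᵀ * (M 1)⁻¹ * Mt 1)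
    (h0' : MBt 0 = MB 0 * (Mt 1)ᵀ * (M 1)⁻¹)
    (hrec : ∀ k, 2 ≤ k → k ≤ N →
      (MB (k - 1))⁻¹ = (M (k - 1))⁻¹ + (Mt k)ᵀ * (M k)⁻¹ * Mt k
        - (MBt (k - 2))ᵀ * (MB (k - 2))⁻¹ * MBt (k - 2))
    (hrec' : ∀ k, 2 ≤ k → k ≤ N →
      MBt (k - 1) = MB (k - 1) * (Mt k)ᵀ * (M k)⁻¹)
    (hN' : (MB N)⁻¹ = (M N)⁻¹ - (MBt (N - 1))ᵀ * (MB (N - 1))⁻¹ * MBt (N - 1)) :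
    -- block model matrices
    let T_F : Matrix (Fin (N + 1) × Fin d) (Fin (N + 1) × Fin d) ℝ :=
      Matrix.of fun p q =>
        if (p.1 : ℕ) = (q.1 : ℕ) then (1 : Matrix (Fin d) (Fin d) ℝ) p.2 q.2
        else if (p.1 : ℕ) = (q.1 : ℕ) + 1 then (-(Mt (p.1 : ℕ))) p.2 q.2
        else 0
    let P_F : Matrix (Fin (N + 1) × Fin d) (Fin (N + 1) × Fin d) ℝ :=
      Matrix.of fun p q =>
        if (p.1 : ℕ) = (q.1 : ℕ) then (M (p.1 : ℕ)) p.2 q.2 else 0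
    let T_B : Matrix (Fin (N + 1) × Fin d) (Fin (N + 1) × Fin d) ℝ :=
      Matrix.of fun p q =>
        if (p.1 : ℕ) = (q.1 : ℕ) then (1 : Matrix (Fin d) (Fin d) ℝ) p.2 q.2
        else if (q.1 : ℕ) = (p.1 : ℕ) + 1 then (-(MBt (p.1 : ℕ))) p.2 q.2
        else 0
    let P_B : Matrix (Fin (N + 1) × Fin d) (Fin (N + 1) × Fin d) ℝ :=
      Matrix.of fun p q =>
        if (p.1 : ℕ) = (q.1 : ℕ) then (MB (p.1 : ℕ)) p.2 q.2 else 0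
    let B : Matrix (Fin (N + 1) × Fin d) (Fin (N + 1) × Fin d) ℝ :=
      P_B * (T_Bᵀ)⁻¹ * T_Fᵀ * P_F⁻¹
    B * P_F * Bᵀ = P_B := by
  intro T_F P_F T_B P_B B
  -- basic facts about the blocks
  have hMun : ∀ k ≤ N, IsUnit (M k).det := fun k hk => (hM k hk).det_pos.ne'.isUnit
  have hMBun : ∀ k ≤ N, IsUnit (MB k).det := fun k hk => (hMB k hk).det_pos.ne'.isUnit
  have hMsym : ∀ k ≤ N, (M k)ᵀ = M k := fun k hk => by
    have h := (hM k hk).1.eq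
    rwa [Matrix.conjTranspose_eq_transpose_of_trivial] at h
  have hMBsym : ∀ k ≤ N, (MB k)ᵀ = MB k := fun k hk => by
    have h := (hMB k hk).1.eq
    rwa [Matrix.conjTranspose_eq_transpose_of_trivial] at h
  have haT : ∀ k ≤ N, ((M k)⁻¹)ᵀ = (M k)⁻¹ := fun k hk => by
    rw [Matrix.transpose_nonsing_inv, hMsym k hk]
  have hbT : ∀ k ≤ N, ((MB k)⁻¹)ᵀ = (MB k)⁻¹ := fun k hk => by
    rw [Matrix.transpose_nonsing_inv, hMBsym k hk]
  -- the central identity between the two tridiagonal forms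
  have hkey_blk : ∀ i j : ℕ, i < N + 1 → j < N + 1 → gF M Mt N i j = gB MB MBt i j :=
    key_blk hN M Mt MB MBt hMBun haT hMBsym h0 h0' hrec hrec' hN'
  -- identification of the model matrices with blockified forms
  have eTF : T_F = Bk N d (fTF Mt) := by
    ext ⟨i, x⟩ ⟨j, y⟩
    simp only [T_F, Bk, fTF, Matrix.of_apply]
    split_ifs <;> simp
  have eTB : T_B = Bk N d (fTB MBt) := by
    ext ⟨i, x⟩ ⟨j, y⟩
    simp only [T_B, Bk, fTB, Matrix.of_apply]
    split_ifs <;> simp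
  have ePF : P_F = Bk N d (fD M) := by
    ext ⟨i, x⟩ ⟨j, y⟩
    simp only [P_F, Bk, fD, Matrix.of_apply]
    split_ifs <;> simp
  have ePB : P_B = Bk N d (fD MB) := by
    ext ⟨i, x⟩ ⟨j, y⟩
    simp only [P_B, Bk, fD, Matrix.of_apply]
    split_ifs <;> simp
  -- block diagonal inverses
  have hPFQF : Bk N d (fD M) * Bk N d (fD fun k => (M k)⁻¹) = 1 :=
    fD_mul_eq_one _ _ fun k hk => Matrix.mul_nonsing_inv _ (hMun k hk)
  have hQFPF : Bk N d (fD fun k => (M k)⁻¹) * Bk N d (fD M) = 1 :=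
    fD_mul_eq_one _ _ fun k hk => Matrix.nonsing_inv_mul _ (hMun k hk)
  have hPBQB : Bk N d (fD MB) * Bk N d (fD fun k => (MB k)⁻¹) = 1 :=
    fD_mul_eq_one _ _ fun k hk => Matrix.mul_nonsing_inv _ (hMBun k hk)
  have hPFinv : (Bk N d (fD M))⁻¹ = Bk N d (fD fun k => (M k)⁻¹) :=
    Matrix.inv_eq_right_inv hPFQF
  have hQFsym : (Bk N d (fD fun k => (M k)⁻¹))ᵀ = Bk N d (fD fun k => (M k)⁻¹) :=
    fD_symm _ haT
  have hPBsym : (Bk N d (fD MB))ᵀ = Bk N d (fD MB) := fD_symm _ hMBsym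
  -- key identity
  have key : (Bk N d (fTF Mt))ᵀ * (Bk N d (fD fun k => (M k)⁻¹) * Bk N d (fTF Mt))
      = (Bk N d (fTB MBt))ᵀ * (Bk N d (fD fun k => (MB k)⁻¹) * Bk N d (fTB MBt)) := by
    rw [diag_mul, diag_mul, Bk_transpose, Bk_transpose, Bk_mul, Bk_mul]
    refine Bk_congr fun i j => ?_
    have h1 := sumF (N := N) M Mt i j i.isLt j.isLt
    have h2 := sumB (N := N) MB MBt i j i.isLt j.isLt
    rw [← Fin.sum_univ_eq_sum_range] at h1 h2
    rw [h1, h2]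
    exact hkey_blk i j i.isLt j.isLt
  -- determinant facts for T_B
  have hTBdet : IsUnit (Bk N d (fTB MBt)).det := isUnit_det_Bk_fTB MBt
  have hTBTdet : IsUnit ((Bk N d (fTB MBt))ᵀ).det := by rwa [Matrix.det_transpose]
  -- assemble
  show P_B * (T_Bᵀ)⁻¹ * T_Fᵀ * P_F⁻¹ * P_F * (P_B * (T_Bᵀ)⁻¹ * T_Fᵀ * P_F⁻¹)ᵀ = P_B
  rw [eTF, eTB, ePF, ePB, hPFinv]
  simp only [Matrix.transpose_mul, Matrix.transpose_transpose, hQFsym, hPBsym]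
  rw [show ((Bk N d (fTB MBt))ᵀ)⁻¹ᵀ = (Bk N d (fTB MBt))⁻¹ from by
    rw [← Matrix.transpose_nonsing_inv, Matrix.transpose_transpose]]
  simp only [Matrix.mul_assoc]
  rw [show ∀ X, Bk N d (fD fun k => (M k)⁻¹) * (Bk N d (fD M) * X) = X from fun X => by
    rw [← Matrix.mul_assoc, hQFPF, Matrix.one_mul]]
  rw [show ∀ X, (Bk N d (fTF Mt))ᵀ * (Bk N d (fD fun k => (M k)⁻¹) * (Bk N d (fTF Mt) * X))
      = (Bk N d (fTB MBt))ᵀ * (Bk N d (fD fun k => (MB k)⁻¹) * (Bk N d (fTB MBt) * X)) from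
    fun X => by
      calc (Bk N d (fTF Mt))ᵀ * (Bk N d (fD fun k => (M k)⁻¹) * (Bk N d (fTF Mt) * X))
          = (Bk N d (fTF Mt))ᵀ * (Bk N d (fD fun k => (M k)⁻¹) * Bk N d (fTF Mt)) * X := by
            simp only [Matrix.mul_assoc]
        _ = (Bk N d (fTB MBt))ᵀ * (Bk N d (fD fun k => (MB k)⁻¹) * Bk N d (fTB MBt)) * X := by
            rw [key]
        _ = (Bk N d (fTB MBt))ᵀ * (Bk N d (fD fun k => (MB k)⁻¹) * (Bk N d (fTB MBt) * X)) := by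
            simp only [Matrix.mul_assoc]]
  rw [show ∀ X, ((Bk N d (fTB MBt))ᵀ)⁻¹ * ((Bk N d (fTB MBt))ᵀ * X) = X from fun X => by
    rw [← Matrix.mul_assoc, Matrix.nonsing_inv_mul _ hTBTdet, Matrix.one_mul]]
  rw [show ∀ X, Bk N d (fTB MBt) * ((Bk N d (fTB MBt))⁻¹ * X) = X from fun X => by
    rw [← Matrix.mul_assoc, Matrix.mul_nonsing_inv _ hTBdet, Matrix.one_mul]]
  rw [← Matrix.mul_assoc, hPBQB, Matrix.one_mul]
end

section
/- Let N ≥ 3. Let G₀, …, G_N be symmetric positive definite d×d real matrices, G_{k,k-1} (k = 1, …, N−1) and G_{k,N} (k = 0, …, N−1) arbitrary d×d real matrices, and assume the reciprocal condition G_k⁻¹ G_{k,N} = G_{k+1,k}ᵀ G_{k+1}⁻¹ G_{k+1,N} holds for all k = 1, …, N−2. Define: R⁰₀ = G₀⁻¹ + G_{1,0}ᵀ G₁⁻¹ G_{1,0}; R⁰_k = G_k⁻¹ + G_{k+1,k}ᵀ G_{k+1}⁻¹ G_{k+1,k} for k = 1, …, N−2; R⁰_{N-1} = G_{N-1}⁻¹;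 R⁰_N = G_N⁻¹ + Σ_{k=1}^{N-1} G_{k,N}ᵀ G_k⁻¹ G_{k,N} + G_{0,N}ᵀ G₀⁻¹ G_{0,N}; R⁺_k = G_{k+1,k}ᵀ G_{k+1}⁻¹ for k = 0, …, N−2; R⁺_{N-1} = G_{N-1}⁻¹ G_{N-1,N}; R⁻₀ = G₀⁻¹ G_{0,N} − G_{1,0}ᵀ G₁⁻¹ G_{1,N}; R⁻_k = (R⁺_{k-1})ᵀ for k = 1, …, N; R⁺_N = (R⁻₀)ᵀ. Let 𝒢 be the (N+1)×(N+1) block matrix with identity blocks on the diagonal, blocks −G_{k,k-1} in positions (k, k−1) for k = 1, …, N−1, blocks −G_{k,N} in positions (k, N) for k = 0, …, N−1, and zero elsewhere; let G be the block-diagonal matrix with blocks G₀, …, G_N; and let ℛ be the cyclic block tridiagonal matrix with diagonal blocks R⁰_k, blocks −R⁺_k in positions (k, k+1), blocks −R⁻_k in positions (k, k−1), block −R⁻₀ in position (0, N), and block −R⁺_N in position (N, 0). Then ℛ = 𝒢ᵀ * G⁻¹ * 𝒢. -/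
open Matrix

namespace Stmt13Helper

variable {d : ℕ}

/-- Block-entry function of the model matrix `𝒢`, on natural indices. -/
def bg (N : ℕ) (Gt GN : ℕ → Matrix (Fin d) (Fin d) ℝ) (k i : ℕ) : Matrix (Fin d) (Fin d) ℝ :=
  if k = i then 1
  else if i = N ∧ k < N then -GN k
  else if k = i + 1 ∧ k < N then -Gt k
  else 0

theorem bg_self (N : ℕ) (Gt GN : ℕ → Matrix (Fin d) (Fin d) ℝ) (k : ℕ) :
    bg N Gt GN k k = 1 := if_pos rfl

theorem bg_zero (N : ℕ) (Gt GN : ℕ → Matrix (Fin d) (Fin d) ℝ) (k i : ℕ)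
    (h1 : k ≠ i) (h2 : ¬(i = N ∧ k < N)) (h3 : ¬(k = i + 1 ∧ k < N)) :
    bg N Gt GN k i = 0 := by
  unfold bg; rw [if_neg h1, if_neg h2, if_neg h3]

theorem bg_Gt (N : ℕ) (Gt GN : ℕ → Matrix (Fin d) (Fin d) ℝ) (k i : ℕ)
    (h1 : k = i + 1) (h2 : k < N) : bg N Gt GN k i = -Gt k := by
  unfold bg; rw [if_neg (by omega), if_neg (by omega), if_pos ⟨h1, h2⟩]

theorem bg_GN (N : ℕ) (Gt GN : ℕ → Matrix (Fin d) (Fin d) ℝ) (k : ℕ)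
    (h2 : k < N) : bg N Gt GN k N = -GN k := by
  unfold bg; rw [if_neg (by omega), if_pos ⟨rfl, h2⟩]

theorem sum_pair_of_mem {M : Type*} [AddCommMonoid M] {s : Finset ℕ} {f : ℕ → M} {a b : ℕ}
    (ha : a ∈ s) (hb : b ∈ s) (hab : a ≠ b)
    (h0 : ∀ c ∈ s, c ≠ a → c ≠ b → f c = 0) : ∑ x ∈ s, f x = f a + f b := by
  have hsub : ({a, b} : Finset ℕ) ⊆ s := by
    intro x hx
    simp only [Finset.mem_insert, Finset.mem_singleton] at hx
    rcases hx with rfl | rfl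
    exacts [ha, hb]
  rw [← Finset.sum_subset hsub]
  · exact Finset.sum_pair hab
  · intro x hx hnx
    simp only [Finset.mem_insert, Finset.mem_singleton, not_or] at hnx
    exact h0 x hx hnx.1 hnx.2

theorem sum_single_of_mem {M : Type*} [AddCommMonoid M] {s : Finset ℕ} {f : ℕ → M} {a : ℕ}
    (ha : a ∈ s) (h0 : ∀ c ∈ s, c ≠ a → f c = 0) : ∑ x ∈ s, f x = f a :=
  Finset.sum_eq_single_of_mem a ha h0

/-- A block matrix built from a function of block indices. -/
def blk {n : ℕ} (B : Fin n → Fin n → Matrix (Fin d) (Fin d) ℝ) :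
    Matrix (Fin n × Fin d) (Fin n × Fin d) ℝ :=
  Matrix.of fun p q => B p.1 q.1 p.2 q.2

theorem blk_mul {n : ℕ} (B C : Fin n → Fin n → Matrix (Fin d) (Fin d) ℝ) :
    blk B * blk C = blk (fun i j => ∑ k, B i k * C k j) := by
  ext p q
  simp [blk, Matrix.mul_apply, Matrix.sum_apply, Fintype.sum_prod_type, Finset.mul_sum,
    Finset.sum_mul]

theorem blk_transpose {n : ℕ} (B : Fin n → Fin n → Matrix (Fin d) (Fin d) ℝ) :
    (blk B)ᵀ = blk (fun i j => (B j i)ᵀ) := rfl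

theorem blk_congr {n : ℕ} {B C : Fin n → Fin n → Matrix (Fin d) (Fin d) ℝ}
    (h : ∀ i j, B i j = C i j) : blk B = blk C := by
  unfold blk; congr 1; funext p q; rw [h]

theorem blk_one {n : ℕ} :
    (1 : Matrix (Fin n × Fin d) (Fin n × Fin d) ℝ)
      = blk (fun i j => if (i : ℕ) = (j : ℕ) then 1 else 0) := by
  ext ⟨i, a⟩ ⟨j, b⟩
  by_cases h : (i : ℕ) = (j : ℕ)
  · have hij : i = j := Fin.val_injective h
    subst hij
    simp [blk, Matrix.one_apply, Prod.ext_iff]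
  · have hne : i ≠ j := fun e => h (by rw [e])
    simp [blk, Matrix.one_apply, Prod.ext_iff, h, hne]

set_option maxHeartbeats 1000000 in
theorem stmt13_key {N d : ℕ} (hN : 3 ≤ N)
    (G Gt GN : ℕ → Matrix (Fin d) (Fin d) ℝ)
    (hrecip : ∀ k, 1 ≤ k → k ≤ N - 2 →
      (G k)⁻¹ * GN k = (Gt (k + 1))ᵀ * (G (k + 1))⁻¹ * GN (k + 1))
    (R0 Rp Rm : ℕ → Matrix (Fin d) (Fin d) ℝ)
    (hR0_0 : R0 0 = (G 0)⁻¹ + (Gt 1)ᵀ * (G 1)⁻¹ * Gt 1)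
    (hR0_k : ∀ k, 1 ≤ k → k ≤ N - 2 →
      R0 k = (G k)⁻¹ + (Gt (k + 1))ᵀ * (G (k + 1))⁻¹ * Gt (k + 1))
    (hR0_N1 : R0 (N - 1) = (G (N - 1))⁻¹)
    (hR0_N : R0 N = (G N)⁻¹ + (∑ k ∈ Finset.Icc 1 (N - 1), (GN k)ᵀ * (G k)⁻¹ * GN k)
      + (GN 0)ᵀ * (G 0)⁻¹ * GN 0)
    (hRp_k : ∀ k ≤ N - 2, Rp k = (Gt (k + 1))ᵀ * (G (k + 1))⁻¹)
    (hRp_N1 : Rp (N - 1) = (G (N - 1))⁻¹ * GN (N - 1))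
    (hRm_0 : Rm 0 = (G 0)⁻¹ * GN 0 - (Gt 1)ᵀ * (G 1)⁻¹ * GN 1)
    (hRm_k : ∀ k, 1 ≤ k → k ≤ N → Rm k = (Rp (k - 1))ᵀ)
    (hRp_N : Rp N = (Rm 0)ᵀ)
    (hsym : ∀ k ≤ N, ((G k)⁻¹)ᵀ = (G k)⁻¹)
    (i j : ℕ) (hi : i ≤ N) (hj : j ≤ N) :
    (if i = j then R0 i
     else if j = i + 1 then -Rp i
     else if i = j + 1 then -Rm i
     else if i = 0 ∧ j = N then -Rm 0
     else if i = N ∧ j = 0 then -Rp N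
     else 0)
    = ∑ k ∈ Finset.range (N + 1), (bg N Gt GN k i)ᵀ * (G k)⁻¹ * bg N Gt GN k j := by
  by_cases h1 : i = j
  · subst h1
    rw [if_pos rfl]
    by_cases h2 : i ≤ N - 2
    · -- diagonal, i ≤ N-2
      have hz : ∀ c ∈ Finset.range (N + 1), c ≠ i → c ≠ i + 1 →
          (bg N Gt GN c i)ᵀ * (G c)⁻¹ * bg N Gt GN c i = 0 := by
        intro c _ hca hcb
        rw [bg_zero N Gt GN c i hca (by omega) (by omega)]
        simp
      rw [sum_pair_of_mem (Finset.mem_range.mpr (by omega)) (Finset.mem_range.mpr (by omega))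
        (by omega) hz, bg_self, bg_Gt N Gt GN (i + 1) i rfl (by omega)]
      have hR : R0 i = (G i)⁻¹ + (Gt (i + 1))ᵀ * (G (i + 1))⁻¹ * Gt (i + 1) := by
        rcases Nat.eq_zero_or_pos i with h | h
        · subst h; exact hR0_0
        · exact hR0_k i h h2
      rw [hR]
      simp [Matrix.transpose_neg, Matrix.transpose_one, neg_mul, mul_neg, neg_neg]
    · by_cases h3 : i = N - 1
      · -- diagonal, i = N-1
        rw [h3]
        have hz : ∀ c ∈ Finset.range (N + 1), c ≠ N - 1 →
            (bg N Gt GN c (N - 1))ᵀ * (G c)⁻¹ * bg N Gt GN c (N - 1) = 0 := by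
          intro c _ hca
          rw [bg_zero N Gt GN c (N - 1) hca (by omega) (by omega)]
          simp
        rw [sum_single_of_mem (Finset.mem_range.mpr (by omega)) hz, bg_self, hR0_N1]
        simp
      · -- diagonal, i = N
        have h4 : i = N := by omega
        rw [h4, Finset.sum_range_succ, bg_self]
        have hstep : ∀ c ∈ Finset.range N,
            (bg N Gt GN c N)ᵀ * (G c)⁻¹ * bg N Gt GN c N = (GN c)ᵀ * (G c)⁻¹ * GN c := by
          intro c hc
          rw [bg_GN N Gt GN c (Finset.mem_range.mp hc)]
          simp [Matrix.transpose_neg, neg_mul, mul_neg, neg_neg]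
        rw [Finset.sum_congr rfl hstep]
        have hsplit : Finset.range N = insert 0 (Finset.Icc 1 (N - 1)) := by
          ext x; simp only [Finset.mem_range, Finset.mem_insert, Finset.mem_Icc]; omega
        rw [hsplit, Finset.sum_insert (by simp), hR0_N]
        simp only [Matrix.transpose_one, Matrix.one_mul, Matrix.mul_one]
        abel
  · by_cases h2 : j = i + 1
    · rw [if_neg h1, if_pos h2, h2]
      by_cases h3 : i ≤ N - 2
      · -- superdiagonal, i ≤ N-2
        rw [hRp_k i h3]
        have hz : ∀ c ∈ Finset.range (N + 1), c ≠ i + 1 →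
            (bg N Gt GN c i)ᵀ * (G c)⁻¹ * bg N Gt GN c (i + 1) = 0 := by
          intro c _ hne
          by_cases hci : c = i
          · rw [hci, bg_zero N Gt GN i (i + 1) (by omega) (by omega) (by omega), mul_zero]
          · rw [bg_zero N Gt GN c i hci (by omega) (by omega)]
            simp
        rw [sum_single_of_mem (Finset.mem_range.mpr (by omega)) hz,
          bg_Gt N Gt GN (i + 1) i rfl (by omega), bg_self]
        simp [Matrix.transpose_neg, neg_mul]
      · -- superdiagonal, i = N-1
        have h4 : i = N - 1 := by omega
        rw [h4]
        have hNe : N - 1 + 1 = N := by omega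
        rw [hNe, hRp_N1]
        have hz : ∀ c ∈ Finset.range (N + 1), c ≠ N - 1 →
            (bg N Gt GN c (N - 1))ᵀ * (G c)⁻¹ * bg N Gt GN c N = 0 := by
          intro c _ hne
          rw [bg_zero N Gt GN c (N - 1) hne (by omega) (by omega)]
          simp
        rw [sum_single_of_mem (Finset.mem_range.mpr (by omega)) hz, bg_self,
          bg_GN N Gt GN (N - 1) (by omega)]
        simp [mul_neg]
    · by_cases h3 : i = j + 1
      · rw [if_neg h1, if_neg h2, if_pos h3, h3]
        by_cases h4 : j ≤ N - 2
        · -- subdiagonal, j ≤ N-2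
          have hRm : Rm (j + 1) = (G (j + 1))⁻¹ * Gt (j + 1) := by
            rw [hRm_k (j + 1) (by omega) (by omega)]
            have e : j + 1 - 1 = j := by omega
            rw [e, hRp_k j h4, Matrix.transpose_mul, Matrix.transpose_transpose,
              hsym (j + 1) (by omega)]
          rw [hRm]
          have hz : ∀ c ∈ Finset.range (N + 1), c ≠ j + 1 →
              (bg N Gt GN c (j + 1))ᵀ * (G c)⁻¹ * bg N Gt GN c j = 0 := by
            intro c _ hne
            by_cases hc2 : c = j + 2
            · rw [hc2, bg_zero N Gt GN (j + 2) j (by omega) (by omega) (by omega), mul_zero]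
            · rw [bg_zero N Gt GN c (j + 1) hne (by omega) (by omega)]
              simp
          rw [sum_single_of_mem (Finset.mem_range.mpr (by omega)) hz, bg_self,
            bg_Gt N Gt GN (j + 1) j rfl (by omega)]
          simp [mul_neg]
        · -- subdiagonal, j = N-1
          have h5 : j = N - 1 := by omega
          rw [h5]
          have hNe : N - 1 + 1 = N := by omega
          rw [hNe]
          have hRm : Rm N = (GN (N - 1))ᵀ * (G (N - 1))⁻¹ := by
            rw [hRm_k N (by omega) le_rfl, hRp_N1, Matrix.transpose_mul,
              hsym (N - 1) (by omega)]
          rw [hRm]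
          have hz : ∀ c ∈ Finset.range (N + 1), c ≠ N - 1 →
              (bg N Gt GN c N)ᵀ * (G c)⁻¹ * bg N Gt GN c (N - 1) = 0 := by
            intro c _ hne
            rw [bg_zero N Gt GN c (N - 1) hne (by omega) (by omega), mul_zero]
          rw [sum_single_of_mem (Finset.mem_range.mpr (by omega)) hz,
            bg_GN N Gt GN (N - 1) (by omega), bg_self]
          simp [Matrix.transpose_neg, neg_mul]
      · by_cases h4 : i = 0 ∧ j = N
        · -- corner (0, N)
          obtain ⟨h4a, h4b⟩ := h4
          rw [if_neg h1, if_neg h2, if_neg h3, if_pos ⟨h4a, h4b⟩, h4a, h4b, hRm_0]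
          have hz : ∀ c ∈ Finset.range (N + 1), c ≠ 0 → c ≠ 1 →
              (bg N Gt GN c 0)ᵀ * (G c)⁻¹ * bg N Gt GN c N = 0 := by
            intro c _ hc0 hc1
            rw [bg_zero N Gt GN c 0 hc0 (by omega) (by omega)]
            simp
          rw [sum_pair_of_mem (Finset.mem_range.mpr (by omega)) (Finset.mem_range.mpr (by omega))
            (by omega) hz, bg_self, bg_GN N Gt GN 0 (by omega),
            bg_Gt N Gt GN 1 0 rfl (by omega), bg_GN N Gt GN 1 (by omega)]
          simp only [Matrix.transpose_neg, Matrix.transpose_one, Matrix.one_mul, neg_mul,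
            mul_neg, neg_neg]
          abel
        · by_cases h5 : i = N ∧ j = 0
          · -- corner (N, 0)
            obtain ⟨h5a, h5b⟩ := h5
            rw [if_neg h1, if_neg h2, if_neg h3, if_neg (by omega), if_pos ⟨h5a, h5b⟩,
              h5a, h5b]
            have hRpN : Rp N = (GN 0)ᵀ * (G 0)⁻¹ - (GN 1)ᵀ * ((G 1)⁻¹ * Gt 1) := by
              rw [hRp_N, hRm_0, Matrix.transpose_sub, Matrix.transpose_mul, Matrix.transpose_mul,
                Matrix.transpose_mul, Matrix.transpose_transpose, hsym 0 (by omega),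
                hsym 1 (by omega)]
            rw [hRpN]
            have hz : ∀ c ∈ Finset.range (N + 1), c ≠ 0 → c ≠ 1 →
                (bg N Gt GN c N)ᵀ * (G c)⁻¹ * bg N Gt GN c 0 = 0 := by
              intro c _ hc0 hc1
              rw [bg_zero N Gt GN c 0 hc0 (by omega) (by omega), mul_zero]
            rw [sum_pair_of_mem (Finset.mem_range.mpr (by omega))
              (Finset.mem_range.mpr (by omega)) (by omega) hz,
              bg_GN N Gt GN 0 (by omega), bg_self, bg_GN N Gt GN 1 (by omega),
              bg_Gt N Gt GN 1 0 rfl (by omega)]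
            simp only [Matrix.transpose_neg, neg_mul, mul_neg, neg_neg, Matrix.mul_one,
              Matrix.mul_assoc]
            abel
          · by_cases h6 : j = N
            · -- interior row against last column: reciprocal condition
              have hi1 : 1 ≤ i := by omega
              have hi2 : i ≤ N - 2 := by omega
              rw [if_neg h1, if_neg h2, if_neg h3, if_neg h4, if_neg (by omega), h6]
              have hz : ∀ c ∈ Finset.range (N + 1), c ≠ i → c ≠ i + 1 →
                  (bg N Gt GN c i)ᵀ * (G c)⁻¹ * bg N Gt GN c N = 0 := by
                intro c _ hca hcb
                rw [bg_zero N Gt GN c i hca (by omega) (by omega)]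
                simp
              rw [sum_pair_of_mem (Finset.mem_range.mpr (by omega))
                (Finset.mem_range.mpr (by omega)) (by omega) hz, bg_self,
                bg_GN N Gt GN i (by omega), bg_Gt N Gt GN (i + 1) i rfl (by omega),
                bg_GN N Gt GN (i + 1) (by omega)]
              have hr := hrecip i hi1 hi2
              simp only [Matrix.transpose_one, Matrix.one_mul, Matrix.transpose_neg, neg_mul,
                mul_neg, neg_neg]
              rw [hr]
              simp
            · by_cases h7 : i = N
              · -- last row against interior column: transposed reciprocal condition
                have hj1 : 1 ≤ j := by omega
                have hj2 : j ≤ N - 2 := by omega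
                rw [if_neg h1, if_neg h2, if_neg h3, if_neg (by omega), if_neg (by omega), h7]
                have hz : ∀ c ∈ Finset.range (N + 1), c ≠ j → c ≠ j + 1 →
                    (bg N Gt GN c N)ᵀ * (G c)⁻¹ * bg N Gt GN c j = 0 := by
                  intro c _ hca hcb
                  rw [bg_zero N Gt GN c j hca (by omega) (by omega), mul_zero]
                rw [sum_pair_of_mem (Finset.mem_range.mpr (by omega))
                  (Finset.mem_range.mpr (by omega)) (by omega) hz,
                  bg_GN N Gt GN j (by omega), bg_self, bg_GN N Gt GN (j + 1) (by omega),
                  bg_Gt N Gt GN (j + 1) j rfl (by omega)]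
                have hr := congrArg Matrix.transpose (hrecip j hj1 hj2)
                simp only [Matrix.transpose_mul, Matrix.transpose_transpose,
                  hsym j (by omega), hsym (j + 1) (by omega)] at hr
                simp only [Matrix.transpose_neg, neg_mul, mul_neg, neg_neg, Matrix.mul_one]
                rw [hr, Matrix.mul_assoc]
                simp
              · -- remaining entries: zero
                rw [if_neg h1, if_neg h2, if_neg h3, if_neg h4, if_neg h5]
                symm
                apply Finset.sum_eq_zero
                intro c hc
                by_cases hc1 : c = i ∨ c = i + 1
                · rw [bg_zero N Gt GN c j (by omega) (by omega) (by omega), mul_zero]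
                · rw [bg_zero N Gt GN c i (by omega) (by omega) (by omega)]
                  simp


end Stmt13Helper


open Stmt13Helper in
set_option maxHeartbeats 1000000 in
theorem stmt13_aux {N d : ℕ} (hN : 3 ≤ N)
    (G Gt GN : ℕ → Matrix (Fin d) (Fin d) ℝ)
    (hG : ∀ k ≤ N, (G k).PosDef)
    (hrecip : ∀ k, 1 ≤ k → k ≤ N - 2 →
      (G k)⁻¹ * GN k = (Gt (k + 1))ᵀ * (G (k + 1))⁻¹ * GN (k + 1))
    (R0 Rp Rm : ℕ → Matrix (Fin d) (Fin d) ℝ)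
    (hR0_0 : R0 0 = (G 0)⁻¹ + (Gt 1)ᵀ * (G 1)⁻¹ * Gt 1)
    (hR0_k : ∀ k, 1 ≤ k → k ≤ N - 2 →
      R0 k = (G k)⁻¹ + (Gt (k + 1))ᵀ * (G (k + 1))⁻¹ * Gt (k + 1))
    (hR0_N1 : R0 (N - 1) = (G (N - 1))⁻¹)
    (hR0_N : R0 N = (G N)⁻¹ + (∑ k ∈ Finset.Icc 1 (N - 1), (GN k)ᵀ * (G k)⁻¹ * GN k)
      + (GN 0)ᵀ * (G 0)⁻¹ * GN 0)
    (hRp_k : ∀ k ≤ N - 2, Rp k = (Gt (k + 1))ᵀ * (G (k + 1))⁻¹)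
    (hRp_N1 : Rp (N - 1) = (G (N - 1))⁻¹ * GN (N - 1))
    (hRm_0 : Rm 0 = (G 0)⁻¹ * GN 0 - (Gt 1)ᵀ * (G 1)⁻¹ * GN 1)
    (hRm_k : ∀ k, 1 ≤ k → k ≤ N → Rm k = (Rp (k - 1))ᵀ)
    (hRp_N : Rp N = (Rm 0)ᵀ) :
    (Matrix.of fun p q : Fin (N + 1) × Fin d =>
        if (p.1 : ℕ) = (q.1 : ℕ) then (R0 (p.1 : ℕ)) p.2 q.2
        else if (q.1 : ℕ) = (p.1 : ℕ) + 1 then (-(Rp (p.1 : ℕ))) p.2 q.2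
        else if (p.1 : ℕ) = (q.1 : ℕ) + 1 then (-(Rm (p.1 : ℕ))) p.2 q.2
        else if (p.1 : ℕ) = 0 ∧ (q.1 : ℕ) = N then (-(Rm 0)) p.2 q.2
        else if (p.1 : ℕ) = N ∧ (q.1 : ℕ) = 0 then (-(Rp N)) p.2 q.2
        else 0)
    = (Matrix.of fun p q : Fin (N + 1) × Fin d =>
        if (p.1 : ℕ) = (q.1 : ℕ) then (1 : Matrix (Fin d) (Fin d) ℝ) p.2 q.2
        else if (q.1 : ℕ) = N ∧ (p.1 : ℕ) < N then (-(GN (p.1 : ℕ))) p.2 q.2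
        else if (p.1 : ℕ) = (q.1 : ℕ) + 1 ∧ (p.1 : ℕ) < N then (-(Gt (p.1 : ℕ))) p.2 q.2
        else 0)ᵀ
      * (Matrix.of fun p q : Fin (N + 1) × Fin d =>
          if (p.1 : ℕ) = (q.1 : ℕ) then (G (p.1 : ℕ)) p.2 q.2 else 0)⁻¹
      * (Matrix.of fun p q : Fin (N + 1) × Fin d =>
        if (p.1 : ℕ) = (q.1 : ℕ) then (1 : Matrix (Fin d) (Fin d) ℝ) p.2 q.2
        else if (q.1 : ℕ) = N ∧ (p.1 : ℕ) < N then (-(GN (p.1 : ℕ))) p.2 q.2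
        else if (p.1 : ℕ) = (q.1 : ℕ) + 1 ∧ (p.1 : ℕ) < N then (-(Gt (p.1 : ℕ))) p.2 q.2
        else 0) := by
  have hle : ∀ k : Fin (N + 1), (k : ℕ) ≤ N := fun k => Nat.lt_succ_iff.mp k.2
  have hdet : ∀ k ≤ N, IsUnit (G k).det := fun k hk => (hG k hk).det_pos.ne'.isUnit
  have hsym : ∀ k ≤ N, ((G k)⁻¹)ᵀ = (G k)⁻¹ := by
    intro k hk
    rw [Matrix.transpose_nonsing_inv]
    congr 1
    have h1 : (G k)ᴴ = G k := (hG k hk).1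
    rwa [Matrix.conjTranspose_eq_transpose_of_trivial] at h1
  -- block forms
  have e𝒢 : (Matrix.of fun p q : Fin (N + 1) × Fin d =>
        if (p.1 : ℕ) = (q.1 : ℕ) then (1 : Matrix (Fin d) (Fin d) ℝ) p.2 q.2
        else if (q.1 : ℕ) = N ∧ (p.1 : ℕ) < N then (-(GN (p.1 : ℕ))) p.2 q.2
        else if (p.1 : ℕ) = (q.1 : ℕ) + 1 ∧ (p.1 : ℕ) < N then (-(Gt (p.1 : ℕ))) p.2 q.2
        else 0)
      = blk (fun k i : Fin (N + 1) => bg N Gt GN (k : ℕ) (i : ℕ)) := by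
    ext p q
    simp only [blk, Matrix.of_apply, bg]
    split_ifs <;> rfl
  have eG : (Matrix.of fun p q : Fin (N + 1) × Fin d =>
        if (p.1 : ℕ) = (q.1 : ℕ) then (G (p.1 : ℕ)) p.2 q.2 else 0)
      = blk (fun k i : Fin (N + 1) => if (k : ℕ) = (i : ℕ) then G (k : ℕ) else 0) := by
    ext p q
    simp only [blk, Matrix.of_apply]
    split_ifs <;> rfl
  have eR : (Matrix.of fun p q : Fin (N + 1) × Fin d =>
        if (p.1 : ℕ) = (q.1 : ℕ) then (R0 (p.1 : ℕ)) p.2 q.2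
        else if (q.1 : ℕ) = (p.1 : ℕ) + 1 then (-(Rp (p.1 : ℕ))) p.2 q.2
        else if (p.1 : ℕ) = (q.1 : ℕ) + 1 then (-(Rm (p.1 : ℕ))) p.2 q.2
        else if (p.1 : ℕ) = 0 ∧ (q.1 : ℕ) = N then (-(Rm 0)) p.2 q.2
        else if (p.1 : ℕ) = N ∧ (q.1 : ℕ) = 0 then (-(Rp N)) p.2 q.2
        else 0)
      = blk (fun p q : Fin (N + 1) =>
        if (p : ℕ) = (q : ℕ) then R0 (p : ℕ)
        else if (q : ℕ) = (p : ℕ) + 1 then -Rp (p : ℕ)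
        else if (p : ℕ) = (q : ℕ) + 1 then -Rm (p : ℕ)
        else if (p : ℕ) = 0 ∧ (q : ℕ) = N then -Rm 0
        else if (p : ℕ) = N ∧ (q : ℕ) = 0 then -Rp N
        else 0) := by
    ext p q
    simp only [blk, Matrix.of_apply]
    split_ifs <;> rfl
  have hGinv : (Matrix.of fun p q : Fin (N + 1) × Fin d =>
        if (p.1 : ℕ) = (q.1 : ℕ) then (G (p.1 : ℕ)) p.2 q.2 else 0)⁻¹
      = blk (fun k i : Fin (N + 1) => if (k : ℕ) = (i : ℕ) then (G (k : ℕ))⁻¹ else 0) := by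
    apply Matrix.inv_eq_right_inv
    rw [eG, blk_mul, blk_one]
    apply blk_congr
    intro a b
    have h0 : ∀ k ∈ (Finset.univ : Finset (Fin (N + 1))), k ≠ a →
        (if (a : ℕ) = (k : ℕ) then G (a : ℕ) else 0)
          * (if (k : ℕ) = (b : ℕ) then (G (k : ℕ))⁻¹ else 0) = 0 := by
      intro k _ hk
      rw [if_neg (fun hc => hk (Fin.val_injective hc).symm), zero_mul]
    rw [Finset.sum_eq_single_of_mem a (Finset.mem_univ a) h0, if_pos rfl]
    by_cases h : (a : ℕ) = (b : ℕ)
    · rw [if_pos h, if_pos h]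
      exact Matrix.mul_nonsing_inv _ (hdet _ (hle a))
    · rw [if_neg h, if_neg h, mul_zero]
  rw [eR, e𝒢, hGinv, blk_transpose]
  have step1 : blk (fun a b : Fin (N + 1) => (bg N Gt GN (b : ℕ) (a : ℕ))ᵀ)
      * blk (fun k i : Fin (N + 1) => if (k : ℕ) = (i : ℕ) then (G (k : ℕ))⁻¹ else 0)
      = blk (fun a l : Fin (N + 1) => (bg N Gt GN (l : ℕ) (a : ℕ))ᵀ * (G (l : ℕ))⁻¹) := by
    rw [blk_mul]
    apply blk_congr
    intro a l
    have h0 : ∀ k ∈ (Finset.univ : Finset (Fin (N + 1))), k ≠ l →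
        (bg N Gt GN (k : ℕ) (a : ℕ))ᵀ
          * (if (k : ℕ) = (l : ℕ) then (G (k : ℕ))⁻¹ else 0) = 0 := by
      intro k _ hk
      rw [if_neg (fun hc => hk (Fin.val_injective hc)), mul_zero]
    rw [Finset.sum_eq_single_of_mem l (Finset.mem_univ l) h0, if_pos rfl]
  rw [step1, blk_mul]
  apply blk_congr
  intro i j
  have hbridge : (∑ l : Fin (N + 1),
        (bg N Gt GN (l : ℕ) (i : ℕ))ᵀ * (G (l : ℕ))⁻¹ * bg N Gt GN (l : ℕ) (j : ℕ))
      = ∑ l ∈ Finset.range (N + 1),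
        (bg N Gt GN l (i : ℕ))ᵀ * (G l)⁻¹ * bg N Gt GN l (j : ℕ) :=
    Fin.sum_univ_eq_sum_range
      (fun l => (bg N Gt GN l (i : ℕ))ᵀ * (G l)⁻¹ * bg N Gt GN l (j : ℕ)) (N + 1)
  rw [hbridge]
  exact stmt13_key hN G Gt GN hrecip R0 Rp Rm hR0_0 hR0_k hR0_N1 hR0_N hRp_k hRp_N1
    hRm_0 hRm_k hRp_N hsym (i : ℕ) (j : ℕ) (hle i) (hle j)

theorem stmt_13 {N d : ℕ} (hN : 3 ≤ N)
    -- CM_L parameters: covariances `G k` (k = 0, …, N), transitions `Gt k = G_{k,k-1}`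
    -- (k = 1, …, N−1), and `GN k = G_{k,N}` (k = 0, …, N−1)
    (G Gt GN : ℕ → Matrix (Fin d) (Fin d) ℝ)
    (hG : ∀ k ≤ N, (G k).PosDef)
    -- the reciprocal condition
    (hrecip : ∀ k, 1 ≤ k → k ≤ N - 2 →
      (G k)⁻¹ * GN k = (Gt (k + 1))ᵀ * (G (k + 1))⁻¹ * GN (k + 1))
    -- the reciprocal-model parameters
    (R0 Rp Rm : ℕ → Matrix (Fin d) (Fin d) ℝ)
    (hR0_0 : R0 0 = (G 0)⁻¹ + (Gt 1)ᵀ * (G 1)⁻¹ * Gt 1)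
    (hR0_k : ∀ k, 1 ≤ k → k ≤ N - 2 →
      R0 k = (G k)⁻¹ + (Gt (k + 1))ᵀ * (G (k + 1))⁻¹ * Gt (k + 1))
    (hR0_N1 : R0 (N - 1) = (G (N - 1))⁻¹)
    (hR0_N : R0 N = (G N)⁻¹ + (∑ k ∈ Finset.Icc 1 (N - 1), (GN k)ᵀ * (G k)⁻¹ * GN k)
      + (GN 0)ᵀ * (G 0)⁻¹ * GN 0)
    (hRp_k : ∀ k ≤ N - 2, Rp k = (Gt (k + 1))ᵀ * (G (k + 1))⁻¹)
    (hRp_N1 : Rp (N - 1) = (G (N - 1))⁻¹ * GN (N - 1))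
    (hRm_0 : Rm 0 = (G 0)⁻¹ * GN 0 - (Gt 1)ᵀ * (G 1)⁻¹ * GN 1)
    (hRm_k : ∀ k, 1 ≤ k → k ≤ N → Rm k = (Rp (k - 1))ᵀ)
    (hRp_N : Rp N = (Rm 0)ᵀ) :
    -- block model matrices
    let 𝒢 : Matrix (Fin (N + 1) × Fin d) (Fin (N + 1) × Fin d) ℝ :=
      Matrix.of fun p q =>
        if (p.1 : ℕ) = (q.1 : ℕ) then (1 : Matrix (Fin d) (Fin d) ℝ) p.2 q.2
        else if (q.1 : ℕ) = N ∧ (p.1 : ℕ) < N then (-(GN (p.1 : ℕ))) p.2 q.2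
        else if (p.1 : ℕ) = (q.1 : ℕ) + 1 ∧ (p.1 : ℕ) < N then (-(Gt (p.1 : ℕ))) p.2 q.2
        else 0
    let Gblk : Matrix (Fin (N + 1) × Fin d) (Fin (N + 1) × Fin d) ℝ :=
      Matrix.of fun p q =>
        if (p.1 : ℕ) = (q.1 : ℕ) then (G (p.1 : ℕ)) p.2 q.2 else 0
    let ℛ : Matrix (Fin (N + 1) × Fin d) (Fin (N + 1) × Fin d) ℝ :=
      Matrix.of fun p q =>
        if (p.1 : ℕ) = (q.1 : ℕ) then (R0 (p.1 : ℕ)) p.2 q.2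
        else if (q.1 : ℕ) = (p.1 : ℕ) + 1 then (-(Rp (p.1 : ℕ))) p.2 q.2
        else if (p.1 : ℕ) = (q.1 : ℕ) + 1 then (-(Rm (p.1 : ℕ))) p.2 q.2
        else if (p.1 : ℕ) = 0 ∧ (q.1 : ℕ) = N then (-(Rm 0)) p.2 q.2
        else if (p.1 : ℕ) = N ∧ (q.1 : ℕ) = 0 then (-(Rp N)) p.2 q.2
        else 0
    ℛ = 𝒢ᵀ * Gblk⁻¹ * 𝒢 := by
  intro 𝒢 Gblk ℛ
  exact stmt13_aux hN G Gt GN hG hrecip R0 Rp Rm hR0_0 hR0_k hR0_N1 hR0_N hRp_k hRp_N1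
    hRm_0 hRm_k hRp_N
end

section
/- Let N ≥ 3 and adopt the hypotheses and definitions of the reciprocal-parameter construction: G₀, …, G_N symmetric positive definite d×d real matrices, matrices G_{k,k-1} (k = 1, …, N−1) and G_{k,N} (k = 0, …, N−1) satisfying G_k⁻¹ G_{k,N} = G_{k+1,k}ᵀ G_{k+1}⁻¹ G_{k+1,N} for k = 1, …, N−2, and R⁰_k, R⁺_k, R⁻_k defined by: R⁰₀ = G₀⁻¹ + G_{1,0}ᵀ G₁⁻¹ G_{1,0}; R⁰_k = G_k⁻¹ + G_{k+1,k}ᵀ G_{k+1}⁻¹ G_{k+1,k} (k = 1, …, N−2); R⁰_{N-1} = G_{N-1}⁻¹; R⁰_N = G_N⁻¹ + Σ_{k=1}^{N-1} G_{k,N}ᵀ G_k⁻¹ G_{k,N} + G_{0,N}ᵀ G₀⁻¹ G_{0,N}; R⁺_k = G_{k+1,k}ᵀ G_{k+1}⁻¹ (k = 0, …, N−2); R⁺_{N-1} = G_{N-1}⁻¹ G_{N-1,N}; R⁻₀ = G₀⁻¹ G_{0,N} − G_{1,0}ᵀ G₁⁻¹ G_{1,N}; R⁻_k = (R⁺_{k-1})ᵀ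 (k = 1, …, N); R⁺_N = (R⁻₀)ᵀ. Suppose vectors x_k, e_k ∈ ℝ^d satisfy the CM_L model: x_N = e_N, x₀ = G_{0,N} x_N + e₀, and x_k = G_{k,k-1} x_{k-1} + G_{k,N} x_N + e_k for k = 1, …, N−1. Define e^R₀ = G₀⁻¹ e₀ − G_{1,0}ᵀ G₁⁻¹ e₁; e^R_k = G_k⁻¹ e_k − G_{k+1,k}ᵀ G_{k+1}⁻¹ e_{k+1} for k = 1, …, N−2; e^R_{N-1} = G_{N-1}⁻¹ e_{N-1}; and e^R_N = −Σ_{k=1}^{N-1} G_{k,N}ᵀ G_k⁻¹ e_k + G_N⁻¹ e_N − G_{0,N}ᵀ G₀⁻¹ e₀. Then: R⁰_k x_k − R⁻_k x_{k-1} − R⁺_k x_{k+1} = e^R_k for all k = 1, …, N−1; R⁰₀ x₀ − R⁻₀ x_N − R⁺₀ x₁ = e^R₀; and R⁰_N x_N − R⁻_N x_{N-1} − R⁺_N x₀ = e^R_N. -/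
open Matrix

private lemma sum_mulVec' {d : ℕ} {ι : Type*} (s : Finset ι)
    (A : ι → Matrix (Fin d) (Fin d) ℝ) (v : Fin d → ℝ) :
    (∑ i ∈ s, A i) *ᵥ v = ∑ i ∈ s, A i *ᵥ v := by
  induction s using Finset.cons_induction with
  | empty => simp
  | cons a s h ih => simp [Finset.sum_cons, Matrix.add_mulVec, ih]

theorem stmt_14 {N d : ℕ} (hN : 3 ≤ N)
    -- CM_L parameters: covariances `G k` (k = 0, …, N), transitions `Gt k = G_{k,k-1}`
    -- (k = 1, …, N−1), and `GN k = G_{k,N}` (k = 0, …, N−1)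
    (G Gt GN : ℕ → Matrix (Fin d) (Fin d) ℝ)
    (hG : ∀ k ≤ N, (G k).PosDef)
    -- the reciprocal condition
    (hrecip : ∀ k, 1 ≤ k → k ≤ N - 2 →
      (G k)⁻¹ * GN k = (Gt (k + 1))ᵀ * (G (k + 1))⁻¹ * GN (k + 1))
    -- the reciprocal-model parameters
    (R0 Rp Rm : ℕ → Matrix (Fin d) (Fin d) ℝ)
    (hR0_0 : R0 0 = (G 0)⁻¹ + (Gt 1)ᵀ * (G 1)⁻¹ * Gt 1)
    (hR0_k : ∀ k, 1 ≤ k → k ≤ N - 2 →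
      R0 k = (G k)⁻¹ + (Gt (k + 1))ᵀ * (G (k + 1))⁻¹ * Gt (k + 1))
    (hR0_N1 : R0 (N - 1) = (G (N - 1))⁻¹)
    (hR0_N : R0 N = (G N)⁻¹ + (∑ k ∈ Finset.Icc 1 (N - 1), (GN k)ᵀ * (G k)⁻¹ * GN k)
      + (GN 0)ᵀ * (G 0)⁻¹ * GN 0)
    (hRp_k : ∀ k ≤ N - 2, Rp k = (Gt (k + 1))ᵀ * (G (k + 1))⁻¹)
    (hRp_N1 : Rp (N - 1) = (G (N - 1))⁻¹ * GN (N - 1))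
    (hRm_0 : Rm 0 = (G 0)⁻¹ * GN 0 - (Gt 1)ᵀ * (G 1)⁻¹ * GN 1)
    (hRm_k : ∀ k, 1 ≤ k → k ≤ N → Rm k = (Rp (k - 1))ᵀ)
    (hRp_N : Rp N = (Rm 0)ᵀ)
    -- sample paths: states `x k`, CM_L noises/boundary values `e k`,
    -- reciprocal noises/boundary values `eR k`
    (x e eR : ℕ → Fin d → ℝ)
    -- the CM_L model
    (hxN : x N = e N)
    (hx0 : x 0 = GN 0 *ᵥ x N + e 0)
    (hxk : ∀ k, 1 ≤ k → k ≤ N - 1 → x k = Gt k *ᵥ x (k - 1) + GN k *ᵥ x N + e k)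
    -- the correspondence defining the reciprocal noises and boundary values
    (he0 : eR 0 = (G 0)⁻¹ *ᵥ e 0 - ((Gt 1)ᵀ * (G 1)⁻¹) *ᵥ e 1)
    (hek : ∀ k, 1 ≤ k → k ≤ N - 2 →
      eR k = (G k)⁻¹ *ᵥ e k - ((Gt (k + 1))ᵀ * (G (k + 1))⁻¹) *ᵥ e (k + 1))
    (heN1 : eR (N - 1) = (G (N - 1))⁻¹ *ᵥ e (N - 1))
    (heN : eR N = -(∑ k ∈ Finset.Icc 1 (N - 1), ((GN k)ᵀ * (G k)⁻¹) *ᵥ e k)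
      + (G N)⁻¹ *ᵥ e N - ((GN 0)ᵀ * (G 0)⁻¹) *ᵥ e 0) :
    -- the reciprocal model holds for the same sample path
    (∀ k, 1 ≤ k → k ≤ N - 1 →
        R0 k *ᵥ x k - Rm k *ᵥ x (k - 1) - Rp k *ᵥ x (k + 1) = eR k) ∧
    R0 0 *ᵥ x 0 - Rm 0 *ᵥ x N - Rp 0 *ᵥ x 1 = eR 0 ∧
    R0 N *ᵥ x N - Rm N *ᵥ x (N - 1) - Rp N *ᵥ x 0 = eR N := by
  obtain ⟨n, rfl⟩ : ∃ n, N = n + 3 := ⟨N - 3, by omega⟩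
  have e1 : n + 3 - 1 = n + 2 := rfl
  have e2 : n + 3 - 2 = n + 1 := rfl
  simp only [e1, e2] at hrecip hR0_k hR0_N1 hR0_N hRp_k hRp_N1 hxk hek heN1 heN ⊢
  -- symmetry of the inverse covariances
  have hsym : ∀ k ≤ n + 3, ((G k)⁻¹)ᵀ = (G k)⁻¹ := by
    intro k hk
    rw [Matrix.transpose_nonsing_inv]
    exact congrArg Inv.inv (hG k hk).isHermitian.eq
  -- transposed reciprocal condition
  have hrecipT : ∀ k, 1 ≤ k → k ≤ n + 1 →
      (GN k)ᵀ * (G k)⁻¹ = (GN (k + 1))ᵀ * (G (k + 1))⁻¹ * Gt (k + 1) := by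
    intro k h1 h2
    have h := congrArg Matrix.transpose (hrecip k h1 h2)
    rw [Matrix.transpose_mul, Matrix.transpose_mul, Matrix.transpose_mul,
      Matrix.transpose_transpose, hsym k (by omega), hsym (k + 1) (by omega)] at h
    rw [h, Matrix.mul_assoc]
  -- expressions for the noises
  have hek' : ∀ k, 1 ≤ k → k ≤ n + 2 →
      e k = x k - Gt k *ᵥ x (k - 1) - GN k *ᵥ x (n + 3) := by
    intro k h1 h2
    rw [hxk k h1 h2]; abel
  have he0' : e 0 = x 0 - GN 0 *ᵥ x (n + 3) := by rw [hx0]; abel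
  refine ⟨?_, ?_, ?_⟩
  · -- interior equations
    intro k hk1 hk2
    rcases Nat.lt_or_ge k (n + 2) with hk | hk
    · -- case 1 ≤ k ≤ n + 1
      have hk2' : k ≤ n + 1 := by omega
      have hkm : k - 1 + 1 = k := by omega
      have hRm : Rm k = (G k)⁻¹ * Gt k := by
        rw [hRm_k k hk1 (by omega), hRp_k (k - 1) (by omega), hkm,
          Matrix.transpose_mul, Matrix.transpose_transpose, hsym k (by omega)]
      rw [hR0_k k hk1 hk2', hRm, hRp_k k hk2', hek k hk1 hk2',
        hek' k hk1 (by omega), hek' (k + 1) (by omega) (by omega)]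
      have hx : k + 1 - 1 = k := rfl
      rw [hx]
      have hv : (G k)⁻¹ *ᵥ (GN k *ᵥ x (n + 3)) =
          (Gt (k + 1))ᵀ *ᵥ ((G (k + 1))⁻¹ *ᵥ (GN (k + 1) *ᵥ x (n + 3))) := by
        rw [Matrix.mulVec_mulVec, Matrix.mulVec_mulVec, Matrix.mulVec_mulVec,
          hrecip k hk1 hk2', Matrix.mul_assoc]
      simp only [Matrix.add_mulVec, Matrix.sub_mulVec, Matrix.mulVec_add, Matrix.mulVec_sub,
        ← Matrix.mulVec_mulVec]
      rw [hv]
      abel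
    · -- case k = n + 2
      have hk' : k = n + 2 := by omega
      subst hk'
      have hRm : Rm (n + 2) = (G (n + 2))⁻¹ * Gt (n + 2) := by
        rw [hRm_k (n + 2) (by omega) (by omega)]
        have : n + 2 - 1 = n + 1 := rfl
        rw [this, hRp_k (n + 1) le_rfl, Matrix.transpose_mul, Matrix.transpose_transpose,
          hsym (n + 2) (by omega)]
      have hxm : n + 2 - 1 = n + 1 := rfl
      rw [hR0_N1, hRm, hRp_N1, heN1, hxm, hek' (n + 2) (by omega) (by omega), hxm]
      simp only [Matrix.add_mulVec, Matrix.sub_mulVec, Matrix.mulVec_add, Matrix.mulVec_sub,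
        ← Matrix.mulVec_mulVec]
      try abel
  · -- boundary equation at 0
    have hRp0 : Rp 0 = (Gt 1)ᵀ * (G 1)⁻¹ := by
      have := hRp_k 0 (by omega); simpa using this
    rw [hR0_0, hRm_0, hRp0, he0, he0', hek' 1 (by omega) (by omega)]
    have : (1 : ℕ) - 1 = 0 := rfl
    rw [this]
    simp only [Matrix.add_mulVec, Matrix.sub_mulVec, Matrix.mulVec_add, Matrix.mulVec_sub,
      ← Matrix.mulVec_mulVec]
    abel
  · -- boundary equation at N
    have hRmN : Rm (n + 3) = (GN (n + 2))ᵀ * (G (n + 2))⁻¹ := by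
      rw [hRm_k (n + 3) (by omega) le_rfl, e1, hRp_N1, Matrix.transpose_mul,
        hsym (n + 2) (by omega)]
    have hRpN : Rp (n + 3) = (GN 0)ᵀ * (G 0)⁻¹ - (GN 1)ᵀ * (G 1)⁻¹ * Gt 1 := by
      rw [hRp_N, hRm_0, Matrix.transpose_sub, Matrix.transpose_mul, hsym 0 (by omega),
        Matrix.transpose_mul, Matrix.transpose_mul, Matrix.transpose_transpose,
        hsym 1 (by omega), Matrix.mul_assoc]
    -- the telescoping sum
    set F : ℕ → Fin d → ℝ := fun i =>
      if i = 0 then ((GN 1)ᵀ * (G 1)⁻¹ * Gt 1) *ᵥ x 0 else ((GN i)ᵀ * (G i)⁻¹) *ᵥ x i with hF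
    have key : ∑ k ∈ Finset.Icc 1 (n + 2),
        (((GN k)ᵀ * (G k)⁻¹ * GN k) *ᵥ x (n + 3) + ((GN k)ᵀ * (G k)⁻¹) *ᵥ e k)
        = ((GN (n + 2))ᵀ * (G (n + 2))⁻¹) *ᵥ x (n + 2)
          - ((GN 1)ᵀ * (G 1)⁻¹ * Gt 1) *ᵥ x 0 := by
      rw [← Finset.Ico_add_one_right_eq_Icc, Finset.sum_Ico_eq_sum_range]
      have hrange : n + 2 + 1 - 1 = n + 2 := rfl
      rw [hrange]
      have hterm : ∀ i ∈ Finset.range (n + 2),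
          ((GN (1 + i))ᵀ * (G (1 + i))⁻¹ * GN (1 + i)) *ᵥ x (n + 3)
            + ((GN (1 + i))ᵀ * (G (1 + i))⁻¹) *ᵥ e (1 + i) = F (i + 1) - F i := by
        intro i hi
        have hi' : i < n + 2 := Finset.mem_range.mp hi
        have h1i : 1 + i = i + 1 := by omega
        rw [h1i]
        have hFsucc : F (i + 1) = ((GN (i + 1))ᵀ * (G (i + 1))⁻¹) *ᵥ x (i + 1) := by
          simp [hF]
        have hx' : x (i + 1) = Gt (i + 1) *ᵥ x i + GN (i + 1) *ᵥ x (n + 3) + e (i + 1) := by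
          have := hxk (i + 1) (by omega) (by omega)
          rwa [show i + 1 - 1 = i from rfl] at this
        have hFi : F i = ((GN (i + 1))ᵀ * (G (i + 1))⁻¹ * Gt (i + 1)) *ᵥ x i := by
          rcases Nat.eq_zero_or_pos i with h0 | h0
          · subst h0; simp [hF]
          · have : F i = ((GN i)ᵀ * (G i)⁻¹) *ᵥ x i := by
              simp [hF, Nat.pos_iff_ne_zero.mp h0]
            rw [this, hrecipT i h0 (by omega)]
        rw [hFsucc, hFi, hx']
        simp only [Matrix.add_mulVec, Matrix.sub_mulVec, Matrix.mulVec_add, Matrix.mulVec_sub,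
          ← Matrix.mulVec_mulVec]
        abel
      rw [Finset.sum_congr rfl hterm, Finset.sum_range_sub F]
      simp [hF]
    have hsplit : (∑ k ∈ Finset.Icc 1 (n + 2), (GN k)ᵀ * (G k)⁻¹ * GN k) *ᵥ x (n + 3)
        + ∑ k ∈ Finset.Icc 1 (n + 2), ((GN k)ᵀ * (G k)⁻¹) *ᵥ e k
        = ((GN (n + 2))ᵀ * (G (n + 2))⁻¹) *ᵥ x (n + 2)
          - ((GN 1)ᵀ * (G 1)⁻¹ * Gt 1) *ᵥ x 0 := by
      rw [sum_mulVec', ← Finset.sum_add_distrib, key]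
    have hsum : ∑ k ∈ Finset.Icc 1 (n + 2), ((GN k)ᵀ * (G k)⁻¹) *ᵥ e k
        = ((GN (n + 2))ᵀ * (G (n + 2))⁻¹) *ᵥ x (n + 2)
          - ((GN 1)ᵀ * (G 1)⁻¹ * Gt 1) *ᵥ x 0
          - (∑ k ∈ Finset.Icc 1 (n + 2), (GN k)ᵀ * (G k)⁻¹ * GN k) *ᵥ x (n + 3) := by
      rw [← hsplit]; abel
    rw [hR0_N, hRmN, hRpN, heN, hsum, ← hxN, he0']
    simp only [Matrix.add_mulVec, Matrix.sub_mulVec, Matrix.mulVec_add, Matrix.mulVec_sub,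
      ← Matrix.mulVec_mulVec]
    abel
end
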